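/- arXiv:1708.02823 — 10 statements merged into one kernel-verified Lean document; each statement's English description precedes it below -/
import Mathlib

section
/- Let (ξ,η) and (ξ',η') be bipartitions of l and l' respectively, with η and η' having t₀ parts each, ξ having t₁+1 parts and ξ' having t₁ parts (padding with zeros). Assume ξ' ⪯ ξ and η ⪯ η' (where μ ⪯ μ' means μ'_{i+1} ≤ μ_i ≤ μ'_i for all i). Then for any subsets P ⊆ {1,...,t₀} and Q ⊆ {1,...,t₁}: ξ_1 + Σ_{i∈Q} ξ_{i+1} + Σ_{i∈P} η_i ≥ (l − l') + Σ_{i∈Q} ξ'_i + Σ_{i∈P} η'_i. -/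
open Finset

/-- technical lemma, item 1. -/
theorem stmt3 (l l' t₀ t₁ : ℕ) (ξ η ξ' η' : ℕ → ℕ)
    (hξ_dec : ∀ i, ξ (i + 1) ≤ ξ i) (hη_dec : ∀ i, η (i + 1) ≤ η i)
    (hξ'_dec : ∀ i, ξ' (i + 1) ≤ ξ' i) (hη'_dec : ∀ i, η' (i + 1) ≤ η' i)
    (hξ_supp : ∀ i, t₁ + 1 ≤ i → ξ i = 0) (hξ'_supp : ∀ i, t₁ ≤ i → ξ' i = 0)
    (hη_supp : ∀ i, t₀ ≤ i → η i = 0) (hη'_supp : ∀ i, t₀ ≤ i → η' i = 0)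
    (hl : ∑ i ∈ range (t₁ + 1), ξ i + ∑ i ∈ range t₀, η i = l)
    (hl' : ∑ i ∈ range t₁, ξ' i + ∑ i ∈ range t₀, η' i = l')
    (hprecξ : ∀ i, ξ (i + 1) ≤ ξ' i ∧ ξ' i ≤ ξ i)
    (hprecη : ∀ i, η' (i + 1) ≤ η i ∧ η i ≤ η' i)
    (P Q : Finset ℕ) (hP : P ⊆ range t₀) (hQ : Q ⊆ range t₁) :
    ((l : ℤ) - (l' : ℤ)) + ∑ i ∈ Q, (ξ' i : ℤ) + ∑ i ∈ P, (η' i : ℤ)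
      ≤ (ξ 0 : ℤ) + ∑ i ∈ Q, (ξ (i + 1) : ℤ) + ∑ i ∈ P, (η i : ℤ) := by
  set f : ℕ → ℤ := fun i => (ξ (i + 1) : ℤ) - (ξ' i : ℤ) with hf
  set g : ℕ → ℤ := fun i => (η i : ℤ) - (η' i : ℤ) with hg
  have hfle : ∀ i ∈ range t₁, f i ≤ 0 := fun i _ => by
    simp [hf]; exact_mod_cast (hprecξ i).1
  have hgle : ∀ i ∈ range t₀, g i ≤ 0 := fun i _ => by
    simp [hg]; exact_mod_cast (hprecη i).2
  have hll' : (l : ℤ) - (l' : ℤ)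
      = (ξ 0 : ℤ) + ∑ i ∈ range t₁, f i + ∑ i ∈ range t₀, g i := by
    have h1 : ∑ i ∈ range (t₁ + 1), (ξ i : ℤ)
        = ∑ i ∈ range t₁, (ξ (i + 1) : ℤ) + (ξ 0 : ℤ) := Finset.sum_range_succ' _ _
    have hlz : (l : ℤ) = ∑ i ∈ range (t₁ + 1), (ξ i : ℤ) + ∑ i ∈ range t₀, (η i : ℤ) := by
      exact_mod_cast (congrArg (Nat.cast : ℕ → ℤ) hl).symm
    have hl'z : (l' : ℤ) = ∑ i ∈ range t₁, (ξ' i : ℤ) + ∑ i ∈ range t₀, (η' i : ℤ) := by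
      exact_mod_cast (congrArg (Nat.cast : ℕ → ℤ) hl').symm
    rw [hlz, hl'z, h1]
    simp [hf, hg, Finset.sum_sub_distrib]
    ring
  have hQs : ∑ i ∈ range t₁, f i ≤ ∑ i ∈ Q, f i := by
    have := Finset.sum_le_sum_of_subset_of_nonneg (f := fun i => -f i) hQ
      (fun i hi _ => by simpa using hfle i hi)
    simpa using this
  have hPs : ∑ i ∈ range t₀, g i ≤ ∑ i ∈ P, g i := by
    have := Finset.sum_le_sum_of_subset_of_nonneg (f := fun i => -g i) hP
      (fun i hi _ => by simpa using hgle i hi)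
    simpa using this
  have : (l : ℤ) - (l' : ℤ) ≤ (ξ 0 : ℤ) + ∑ i ∈ Q, f i + ∑ i ∈ P, g i := by
    rw [hll']; linarith
  have hQf : ∑ i ∈ Q, f i = ∑ i ∈ Q, (ξ (i + 1) : ℤ) - ∑ i ∈ Q, (ξ' i : ℤ) := by
    simp [hf, Finset.sum_sub_distrib]
  have hPg : ∑ i ∈ P, g i = ∑ i ∈ P, (η i : ℤ) - ∑ i ∈ P, (η' i : ℤ) := by
    simp [hg, Finset.sum_sub_distrib]
  linarith [this, hQf, hPg]
end

section
/- Let (ξ,η) and (ξ',η') be bipartitions of l and l' respectively, with η, η' having t₀ parts, ξ having t₁+1 parts, ξ' having t₁ parts, and suppose ξ' ⪯ ξ and η ⪯ η'. Then for any P ⊆ {1,...,t₀} and Q ⊆ {1,...,t₁+1}: Σ_{i∈Q} ξ_i + Σ_{i∈P} η_i ≤ (l − l') + η'_1 + Σ_{i∈Q} ξ'_i + Σ_{i∈P} η'_{i+1}, where ξ_{t₁+1} and η'_{t₀+1} are taken to be 0. -/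
open Finset

/-- technical lemma, item 2. Here ξ_{t₁+1} = 0 and η'_{t₀+1} = 0,
which is enforced by the support hypotheses. -/
theorem stmt4 (l l' t₀ t₁ : ℕ) (ξ η ξ' η' : ℕ → ℕ)
    (hξ_dec : ∀ i, ξ (i + 1) ≤ ξ i) (hη_dec : ∀ i, η (i + 1) ≤ η i)
    (hξ'_dec : ∀ i, ξ' (i + 1) ≤ ξ' i) (hη'_dec : ∀ i, η' (i + 1) ≤ η' i)
    (hξ_supp : ∀ i, t₁ + 1 ≤ i → ξ i = 0) (hξ'_supp : ∀ i, t₁ ≤ i → ξ' i = 0)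
    (hη_supp : ∀ i, t₀ ≤ i → η i = 0) (hη'_supp : ∀ i, t₀ ≤ i → η' i = 0)
    (hl : ∑ i ∈ range (t₁ + 1), ξ i + ∑ i ∈ range t₀, η i = l)
    (hl' : ∑ i ∈ range t₁, ξ' i + ∑ i ∈ range t₀, η' i = l')
    (hprecξ : ∀ i, ξ (i + 1) ≤ ξ' i ∧ ξ' i ≤ ξ i)
    (hprecη : ∀ i, η' (i + 1) ≤ η i ∧ η i ≤ η' i)
    (P Q : Finset ℕ) (hP : P ⊆ range t₀) (hQ : Q ⊆ range (t₁ + 1)) :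
    ∑ i ∈ Q, (ξ i : ℤ) + ∑ i ∈ P, (η i : ℤ)
      ≤ ((l : ℤ) - (l' : ℤ)) + (η' 0 : ℤ)
        + ∑ i ∈ Q, (ξ' i : ℤ) + ∑ i ∈ P, (η' (i + 1) : ℤ) := by
  have key1 : ∑ i ∈ Q, ((ξ i : ℤ) - ξ' i) ≤ ∑ i ∈ range (t₁ + 1), ((ξ i : ℤ) - ξ' i) :=
    Finset.sum_le_sum_of_subset_of_nonneg hQ (fun i _ _ =>
      sub_nonneg.mpr (by exact_mod_cast (hprecξ i).2))
  have key2 : ∑ i ∈ P, ((η i : ℤ) - η' (i + 1)) ≤ ∑ i ∈ range t₀, ((η i : ℤ) - η' (i + 1)) :=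
    Finset.sum_le_sum_of_subset_of_nonneg hP (fun i _ _ =>
      sub_nonneg.mpr (by exact_mod_cast (hprecη i).1))
  have e1 : ∑ i ∈ range t₁, (ξ' i : ℤ) = ∑ i ∈ range (t₁ + 1), (ξ' i : ℤ) := by
    rw [Finset.sum_range_succ, hξ'_supp t₁ le_rfl]; simp
  have e2 : ∑ i ∈ range t₀, (η' (i + 1) : ℤ) = ∑ i ∈ range t₀, (η' i : ℤ) - η' 0 := by
    have h := Finset.sum_range_succ' (fun i => (η' i : ℤ)) t₀
    rw [Finset.sum_range_succ] at h
    have h0 : (η' t₀ : ℤ) = 0 := by exact_mod_cast hη'_supp t₀ le_rfl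
    linarith
  simp only [Finset.sum_sub_distrib] at key1 key2
  rw [← hl, ← hl']
  push_cast
  linarith
end

section
/- Suppose partitions η (with r+1 parts) and η' (with r parts) have a common ⪯-predecessor: there exists a partition ζ with ζ ⪯ η and ζ ⪯ η' (where ζ ⪯ η means η_{i+1} ≤ ζ_i ≤ η_i for all i). If |η| = l, |η'| = l', and l ≥ 2l', then η ≥ (l−l') ∪ η' in the dominance order, i.e. Σ_{i=1}^{k+1} η_i ≥ (l−l') + Σ_{i=1}^k η'_i for all k ≥ 0. -/
open Finset

/-- if η (with r+1 parts) and η' (with r parts) have a common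
⪯-predecessor ζ, |η| = l, |η'| = l', l ≥ 2l', then η ≥ (l−l') ∪ η' in
the dominance order: Σ_{i=1}^{k+1} η_i ≥ (l−l') + Σ_{i=1}^k η'_i for all k. -/
theorem stmt5 (l l' r : ℕ) (η η' ζ : ℕ → ℕ)
    (hη_dec : ∀ i, η (i + 1) ≤ η i) (hη'_dec : ∀ i, η' (i + 1) ≤ η' i)
    (hζ_dec : ∀ i, ζ (i + 1) ≤ ζ i)
    (hη_supp : ∀ i, r + 1 ≤ i → η i = 0) (hη'_supp : ∀ i, r ≤ i → η' i = 0)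
    (hζ_supp : ∀ i, r ≤ i → ζ i = 0)
    (hζη : ∀ i, η (i + 1) ≤ ζ i ∧ ζ i ≤ η i)
    (hζη' : ∀ i, η' (i + 1) ≤ ζ i ∧ ζ i ≤ η' i)
    (hl : ∑ i ∈ range (r + 1), η i = l) (hl' : ∑ i ∈ range r, η' i = l')
    (hstab : 2 * l' ≤ l) :
    ∀ k, (l - l') + ∑ i ∈ range k, η' i ≤ ∑ i ∈ range (k + 1), η i := by
  intro k
  rcases le_or_gt r k with hk | hk
  · have h1 : ∑ i ∈ range k, η' i = l' := by
      rw [← hl']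
      exact (Finset.sum_subset (range_subset_range.mpr hk)
        (fun i _ hi => hη'_supp i (by simpa using hi))).symm
    have h2 : ∑ i ∈ range (k + 1), η i = l := by
      rw [← hl]
      exact (Finset.sum_subset (range_subset_range.mpr (by omega))
        (fun i _ hi => hη_supp i (by simpa using hi))).symm
    omega
  · have hsplit : ∑ i ∈ range (k + 1), η i + ∑ i ∈ Ico (k + 1) (r + 1), η i = l := by
      rw [← hl]; exact Finset.sum_range_add_sum_Ico η (by omega)
    have hsplit' : ∑ i ∈ range k, η' i + ∑ i ∈ Ico k r, η' i = l' := by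
      rw [← hl']; exact Finset.sum_range_add_sum_Ico η' (by omega)
    have hT : ∑ i ∈ Ico (k + 1) (r + 1), η i ≤ ∑ i ∈ Ico k r, η' i := by
      rw [Finset.sum_Ico_eq_sum_range, Finset.sum_Ico_eq_sum_range]
      have hlen : r + 1 - (k + 1) = r - k := by omega
      rw [hlen]
      refine Finset.sum_le_sum fun i _ => ?_
      have h := (hζη (k + i)).1.trans (hζη' (k + i)).2
      simpa [Nat.add_right_comm k 1 i] using h
    omega
end

section
/- Suppose partitions η and η' have a common ⪯-predecessor ζ (i.e. ζ ⪯ η and ζ ⪯ η'), with |η| = l, |η'| = l', l ≥ 2l', and η' = (η'_1,...,η'_r). Then η ≤ (l − l' + η'_1 + η'_2, η'_3, ..., η'_r) in the dominance order. -/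
open Finset

/-- if η and η' have a common ⪯-predecessor ζ, with |η| = l,
|η'| = l', l ≥ 2l', then η ≤ (l − l' + η'_1 + η'_2, η'_3, ..., η'_r)
in the dominance order. -/
theorem stmt6 (l l' r : ℕ) (η η' ζ : ℕ → ℕ)
    (hη_dec : ∀ i, η (i + 1) ≤ η i) (hη'_dec : ∀ i, η' (i + 1) ≤ η' i)
    (hζ_dec : ∀ i, ζ (i + 1) ≤ ζ i)
    (hη_supp : ∀ i, r + 1 ≤ i → η i = 0) (hη'_supp : ∀ i, r ≤ i → η' i = 0)
    (hζ_supp : ∀ i, r ≤ i → ζ i = 0)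
    (hζη : ∀ i, η (i + 1) ≤ ζ i ∧ ζ i ≤ η i)
    (hζη' : ∀ i, η' (i + 1) ≤ ζ i ∧ ζ i ≤ η' i)
    (hl : ∑ i ∈ range (r + 1), η i = l) (hl' : ∑ i ∈ range r, η' i = l')
    (hstab : 2 * l' ≤ l) :
    ∀ k, ∑ i ∈ range k, η i
      ≤ ∑ i ∈ range k, (fun i => if i = 0 then l - l' + η' 0 + η' 1 else η' (i + 1)) i := by
  intro k
  match k with
  | 0 => simp
  | (m + 1) =>
    have h1 : ∑ i ∈ range (m + 1), η i + ∑ i ∈ Ico (m + 1) (m + r + 2), η' (i + 1)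
        ≤ l := by
      have hTle : ∑ i ∈ Ico (m + 1) (m + r + 2), η' (i + 1)
          ≤ ∑ i ∈ Ico (m + 1) (m + r + 2), η i :=
        Finset.sum_le_sum fun i _ => le_trans (hζη' i).1 (hζη i).2
      have hsplit : ∑ i ∈ range (m + 1), η i + ∑ i ∈ Ico (m + 1) (m + r + 2), η i
          = ∑ i ∈ range (m + r + 2), η i := by
        simp only [Finset.range_eq_Ico]
        exact Finset.sum_Ico_consecutive η (m := 0) (n := m + 1) (k := m + r + 2) (Nat.zero_le _) (by omega)
      have hNl : ∑ i ∈ range (m + r + 2), η i = l := by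
        rw [← hl]
        symm
        apply Finset.sum_subset (Finset.range_subset_range.2 (by omega))
        intro x _ hx
        exact hη_supp x (by simp at hx ⊢; omega)
      omega
    have h2 : ∑ i ∈ range (m + 2), η' i + ∑ i ∈ Ico (m + 1) (m + r + 2), η' (i + 1)
        = l' := by
      have hshift : ∑ i ∈ Ico (m + 1) (m + r + 2), η' (i + 1)
          = ∑ i ∈ Ico (m + 2) (m + r + 3), η' i := by
        rw [Finset.sum_Ico_eq_sum_range, Finset.sum_Ico_eq_sum_range]
        apply Finset.sum_congr (by congr 1; omega)
        intro i _
        congr 1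
        omega
      have hsplit : ∑ i ∈ range (m + 2), η' i + ∑ i ∈ Ico (m + 2) (m + r + 3), η' i
          = ∑ i ∈ range (m + r + 3), η' i := by
        simp only [Finset.range_eq_Ico]
        exact Finset.sum_Ico_consecutive η' (m := 0) (n := m + 2) (k := m + r + 3) (Nat.zero_le _) (by omega)
      have hNl' : ∑ i ∈ range (m + r + 3), η' i = l' := by
        rw [← hl']
        symm
        apply Finset.sum_subset (Finset.range_subset_range.2 (by omega))
        intro x _ hx
        exact hη'_supp x (by simp at hx ⊢; omega)
      omega
    have h3 : ∑ i ∈ range (m + 1),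
          (fun i => if i = 0 then l - l' + η' 0 + η' 1 else η' (i + 1)) i
        = l - l' + ∑ i ∈ range (m + 2), η' i := by
      rw [Finset.sum_range_succ', show m + 2 = m + 1 + 1 from rfl,
        Finset.sum_range_succ', Finset.sum_range_succ']
      simp
      omega
    rw [h3]
    omega
end

section
/- Fix a bipartition (ξ',η') of l' and let l ≥ 2l'. Consider the set Θ(ξ',η') of bipartitions (ξ,η) of l with ξ' ⪯ ξ and η ⪯ η'. Then the bipartition ((l−l') ∪ ξ', η') belongs to Θ(ξ',η') and is its minimum for the Achar–Henderson order; and ((l−l'+η'_1+ξ'_1, ξ'_2,...,ξ'_r), (η'_2,...,η'_r)) belongs to Θ(ξ',η') and is its maximum. -/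
open Finset

/-- The relation μ ⪯ μ' : μ'_{i+1} ≤ μ_i ≤ μ'_i for all i. -/
def Prec (μ μ' : ℕ → ℕ) : Prop := ∀ i, μ' (i + 1) ≤ μ i ∧ μ i ≤ μ' i

/-- The Achar–Henderson order on bipartitions. -/
def AHle (ρ σ μ ν : ℕ → ℕ) : Prop :=
  ∀ k, (∑ i ∈ range k, (ρ i + σ i) ≤ ∑ i ∈ range k, (μ i + ν i)) ∧
    (∑ i ∈ range k, (ρ i + σ i) + ρ k ≤ ∑ i ∈ range k, (μ i + ν i) + μ k)

lemma key_sum (f g : ℕ → ℕ) (r : ℕ) (h : ∀ i, f i ≤ g i) (hg : ∀ i, r ≤ i → g i = 0)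
    (j : ℕ) :
    ∑ i ∈ range r, f i + ∑ i ∈ range j, g i ≤ ∑ i ∈ range j, f i + ∑ i ∈ range r, g i := by
  rcases le_total j r with hjr | hjr
  · have h1 : range j ⊆ range r := range_subset_range.mpr hjr
    rw [← Finset.sum_sdiff h1 (f := f), ← Finset.sum_sdiff h1 (f := g)]
    have := Finset.sum_le_sum (s := range r \ range j) (f := f) (g := g) (fun i _ => h i)
    omega
  · have h1 : range r ⊆ range j := range_subset_range.mpr hjr
    rw [← Finset.sum_sdiff h1 (f := f), ← Finset.sum_sdiff h1 (f := g)]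
    have hz : ∀ i ∈ range j \ range r, g i = 0 := by
      intro i hi
      simp only [Finset.mem_sdiff, Finset.mem_range] at hi
      exact hg i (by omega)
    have hzf : ∀ i ∈ range j \ range r, f i = 0 := fun i hi =>
      Nat.le_antisymm (hz i hi ▸ h i) (Nat.zero_le _)
    rw [Finset.sum_eq_zero hz, Finset.sum_eq_zero hzf]
    omega

/-- for the set Θ(ξ',η') of bipartitions (ξ,η) of l with
ξ' ⪯ ξ and η ⪯ η', the bipartition ((l−l') ∪ ξ', η') is its minimum and
((l−l'+η'_1+ξ'_1, ξ'_2,...,ξ'_r), (η'_2,...,η'_r)) its maximum, for the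
Achar–Henderson order. -/
theorem stmt13 (l l' r : ℕ) (ξ' η' : ℕ → ℕ)
    (hξ'_dec : ∀ i, ξ' (i + 1) ≤ ξ' i) (hη'_dec : ∀ i, η' (i + 1) ≤ η' i)
    (hξ'_supp : ∀ i, r ≤ i → ξ' i = 0) (hη'_supp : ∀ i, r ≤ i → η' i = 0)
    (hl' : ∑ i ∈ range r, ξ' i + ∑ i ∈ range r, η' i = l')
    (hstab : 2 * l' ≤ l) :
    let Θ : (ℕ → ℕ) → (ℕ → ℕ) → Prop := fun ξ η =>
      (∀ i, ξ (i + 1) ≤ ξ i) ∧ (∀ i, η (i + 1) ≤ η i) ∧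
      (∀ i, r + 1 ≤ i → ξ i = 0) ∧ (∀ i, r ≤ i → η i = 0) ∧
      (∑ i ∈ range (r + 1), ξ i + ∑ i ∈ range r, η i = l) ∧
      Prec ξ' ξ ∧ Prec η η'
    let ξmin : ℕ → ℕ := fun i => if i = 0 then l - l' else ξ' (i - 1)
    let ξmax : ℕ → ℕ := fun i => if i = 0 then l - l' + η' 0 + ξ' 0 else ξ' i
    let ηmax : ℕ → ℕ := fun i => η' (i + 1)
    Θ ξmin η' ∧ (∀ ξ η, Θ ξ η → AHle ξmin η' ξ η) ∧
    Θ ξmax ηmax ∧ (∀ ξ η, Θ ξ η → AHle ξ η ξmax ηmax) := by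
  intro Θ ξmin ξmax ηmax
  have hmin0 : ξmin 0 = l - l' := by simp [ξmin]
  have hminS : ∀ i, ξmin (i + 1) = ξ' i := by intro i; simp [ξmin]
  have hmax0 : ξmax 0 = l - l' + η' 0 + ξ' 0 := by simp [ξmax]
  have hmaxS : ∀ i, ξmax (i + 1) = ξ' (i + 1) := by intro i; simp [ξmax]
  -- rewriting of the head of the sums of ξ', η'
  have hA : ∑ i ∈ range r, ξ' i = ∑ i ∈ range r, ξ' (i + 1) + ξ' 0 := by
    have h1 := Finset.sum_range_succ' ξ' r
    have h2 := Finset.sum_range_succ ξ' r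
    rw [hξ'_supp r le_rfl] at h2
    omega
  have hB : ∑ i ∈ range r, η' i = ∑ i ∈ range r, η' (i + 1) + η' 0 := by
    have h1 := Finset.sum_range_succ' η' r
    have h2 := Finset.sum_range_succ η' r
    rw [hη'_supp r le_rfl] at h2
    omega
  have hξ'0 : ξ' 0 ≤ ∑ i ∈ range r, ξ' i := by
    rcases Nat.eq_zero_or_pos r with h | h
    · have h0 := hξ'_supp 0 (by omega)
      simp [h0]
    · exact Finset.single_le_sum (fun i _ => Nat.zero_le _) (Finset.mem_range.mpr h)
  have hη'0 : η' 0 ≤ ∑ i ∈ range r, η' i := by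
    rcases Nat.eq_zero_or_pos r with h | h
    · have h0 := hη'_supp 0 (by omega)
      simp [h0]
    · exact Finset.single_le_sum (fun i _ => Nat.zero_le _) (Finset.mem_range.mpr h)
  refine ⟨?_, ?_, ?_, ?_⟩
  · -- ξmin belongs to Θ
    simp only [Θ]
    refine ⟨?_, hη'_dec, ?_, hη'_supp, ?_, ?_, fun i => ⟨hη'_dec i, le_rfl⟩⟩
    · intro i
      cases i with
      | zero => rw [hminS 0, hmin0]; omega
      | succ n => rw [hminS (n + 1), hminS n]; exact hξ'_dec n
    · intro i hi
      rw [show i = (i - 1) + 1 by omega, hminS]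
      exact hξ'_supp _ (by omega)
    · have e : ∑ i ∈ range (r + 1), ξmin i = ∑ i ∈ range r, ξ' i + (l - l') := by
        rw [Finset.sum_range_succ' ξmin r]
        simp only [hminS, hmin0]
      rw [e]; omega
    · intro i
      refine ⟨le_of_eq (hminS i), ?_⟩
      cases i with
      | zero => rw [hmin0]; omega
      | succ n => rw [hminS n]; exact hξ'_dec n
  · -- minimality
    intro ξ η hΘ
    simp only [Θ] at hΘ
    obtain ⟨-, -, -, -, htot, hp1, hp2⟩ := hΘ
    have htot' : ξ 0 + ∑ i ∈ range r, ξ (i + 1) + ∑ i ∈ range r, η i = l := by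
      rw [Finset.sum_range_succ' ξ r] at htot; omega
    have core : ∀ p q : ℕ, (l - l') + ∑ i ∈ range p, ξ' i + ∑ i ∈ range q, η' i ≤
        ξ 0 + ∑ i ∈ range p, ξ (i + 1) + ∑ i ∈ range q, η i := by
      intro p q
      have k1 : ∑ i ∈ range r, ξ (i + 1) + ∑ i ∈ range p, ξ' i ≤
          ∑ i ∈ range p, ξ (i + 1) + ∑ i ∈ range r, ξ' i :=
        key_sum _ _ r (fun i => (hp1 i).1) hξ'_supp p
      have k2 : ∑ i ∈ range r, η i + ∑ i ∈ range q, η' i ≤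
          ∑ i ∈ range q, η i + ∑ i ∈ range r, η' i :=
        key_sum _ _ r (fun i => (hp2 i).2) hη'_supp q
      omega
    intro k
    cases k with
    | zero =>
      constructor
      · simp
      · have := core 0 0
        simp only [range_zero, Finset.sum_empty] at this ⊢
        rw [hmin0]; omega
    | succ j =>
      have e1 : ∑ i ∈ range (j + 1), (ξmin i + η' i) =
          ((l - l') + ∑ i ∈ range j, ξ' i) + ∑ i ∈ range (j + 1), η' i := by
        rw [Finset.sum_add_distrib, Finset.sum_range_succ' ξmin j]
        simp only [hminS, hmin0]
        omega
      have e2 : ∑ i ∈ range (j + 1), (ξ i + η i) =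
          (ξ 0 + ∑ i ∈ range j, ξ (i + 1)) + ∑ i ∈ range (j + 1), η i := by
        rw [Finset.sum_add_distrib, Finset.sum_range_succ' ξ j]
        omega
      constructor
      · rw [e1, e2]
        have := core j (j + 1)
        omega
      · rw [e1, e2, hminS j]
        have hc := core (j + 1) (j + 1)
        have e3 := Finset.sum_range_succ ξ' j
        have e4 : ∑ i ∈ range (j + 1), ξ (i + 1) = ∑ i ∈ range j, ξ (i + 1) + ξ (j + 1) :=
          Finset.sum_range_succ _ j
        omega
  · -- ξmax belongs to Θ
    simp only [Θ]
    refine ⟨?_, fun i => hη'_dec (i + 1), ?_, fun i hi => hη'_supp _ (by omega), ?_, ?_,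
      fun i => ⟨le_rfl, hη'_dec i⟩⟩
    · intro i
      cases i with
      | zero =>
        rw [hmaxS 0, hmax0]
        have := hξ'_dec 0
        omega
      | succ n => rw [hmaxS (n + 1), hmaxS n]; exact hξ'_dec (n + 1)
    · intro i hi
      rw [show i = (i - 1) + 1 by omega, hmaxS]
      exact hξ'_supp _ (by omega)
    · have e : ∑ i ∈ range (r + 1), ξmax i =
          ∑ i ∈ range r, ξ' (i + 1) + (l - l' + η' 0 + ξ' 0) := by
        rw [Finset.sum_range_succ' ξmax r]
        simp only [hmaxS, hmax0]
      have e' : ∑ i ∈ range r, ηmax i = ∑ i ∈ range r, η' (i + 1) := by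
        simp only [ηmax]
      rw [e, e']; omega
    · intro i
      cases i with
      | zero =>
        refine ⟨?_, ?_⟩
        · rw [hmaxS 0]; exact hξ'_dec 0
        · rw [hmax0]; omega
      | succ n =>
        rw [hmaxS (n + 1), hmaxS n]
        exact ⟨hξ'_dec (n + 1), le_rfl⟩
  · -- maximality
    intro ξ η hΘ
    simp only [Θ] at hΘ
    obtain ⟨-, -, hξs, hηs, htot, hp1, hp2⟩ := hΘ
    have htot' : ξ 0 + ∑ i ∈ range r, ξ (i + 1) + ∑ i ∈ range r, η i = l := by
      rw [Finset.sum_range_succ' ξ r] at htot; omega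
    have core : ∀ p q : ℕ, ξ 0 + ∑ i ∈ range p, ξ (i + 1) + ∑ i ∈ range q, η i ≤
        (l - l') + (ξ' 0 + η' 0) + ∑ i ∈ range p, ξ' (i + 1) + ∑ i ∈ range q, η' (i + 1) := by
      intro p q
      have k1 : ∑ i ∈ range r, ξ' (i + 1) + ∑ i ∈ range p, ξ (i + 1) ≤
          ∑ i ∈ range p, ξ' (i + 1) + ∑ i ∈ range r, ξ (i + 1) :=
        key_sum _ _ r (fun i => (hp1 (i + 1)).2) (fun i hi => hξs (i + 1) (by omega)) p
      have k2 : ∑ i ∈ range r, η' (i + 1) + ∑ i ∈ range q, η i ≤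
          ∑ i ∈ range q, η' (i + 1) + ∑ i ∈ range r, η i :=
        key_sum _ _ r (fun i => (hp2 i).1) hηs q
      omega
    intro k
    cases k with
    | zero =>
      constructor
      · simp
      · have := core 0 0
        simp only [range_zero, Finset.sum_empty] at this ⊢
        rw [hmax0]; omega
    | succ j =>
      have e1 : ∑ i ∈ range (j + 1), (ξmax i + ηmax i) =
          ((l - l' + η' 0 + ξ' 0) + ∑ i ∈ range j, ξ' (i + 1)) +
            ∑ i ∈ range (j + 1), η' (i + 1) := by
        rw [Finset.sum_add_distrib, Finset.sum_range_succ' ξmax j]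
        simp only [hmaxS, hmax0, ηmax]
        omega
      have e2 : ∑ i ∈ range (j + 1), (ξ i + η i) =
          (ξ 0 + ∑ i ∈ range j, ξ (i + 1)) + ∑ i ∈ range (j + 1), η i := by
        rw [Finset.sum_add_distrib, Finset.sum_range_succ' ξ j]
        omega
      constructor
      · rw [e1, e2]
        have := core j (j + 1)
        omega
      · rw [e1, e2, hmaxS j]
        have hc := core (j + 1) (j + 1)
        have e4 : ∑ i ∈ range (j + 1), ξ (i + 1) = ∑ i ∈ range j, ξ (i + 1) + ξ (j + 1) :=
          Finset.sum_range_succ _ j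
        have e5 : ∑ i ∈ range (j + 1), ξ' (i + 1) = ∑ i ∈ range j, ξ' (i + 1) + ξ' (j + 1) :=
          Finset.sum_range_succ _ j
        omega
end

section
/- Fix a bipartition (ξ',η') of l' with l ≥ 2l'. Consider the set of bipartitions (η,ξ) of l such that η' ⪯ η and ξ ⪯ ξ'. Then ((l−l') ∪ η', ξ') is the minimum and ((l−l'+ξ'_1+η'_1, η'_2,...,η'_r), (ξ'_2,...,ξ'_r)) is the maximum of this set for the Achar–Henderson order on bipartitions of l. -/
open Finset

lemma AHle_key (N : ℕ) (ρ σ μ ν : ℕ → ℕ)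
    (hsum : ∑ i ∈ range N, (ρ i + σ i) = ∑ i ∈ range N, (μ i + ν i))
    (hρ : ∀ i, N ≤ i → ρ i + σ i = 0) (hμ : ∀ i, N ≤ i → μ i + ν i = 0)
    (hA : ∀ i, 1 ≤ i → μ i ≤ ρ i) (hB : ∀ i, ν i ≤ σ i) :
    AHle ρ σ μ ν := by
  intro k
  set M := max (k + 1) N with hM
  have hkM : k + 1 ≤ M := le_max_left _ _
  have hNM : N ≤ M := le_max_right _ _
  have hext : ∀ f : ℕ → ℕ, (∀ i, N ≤ i → f i = 0) →
      ∑ i ∈ range M, f i = ∑ i ∈ range N, f i := by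
    intro f hf
    rw [← Finset.sum_range_add_sum_Ico f hNM]
    have h0 : ∑ i ∈ Ico N M, f i = 0 :=
      Finset.sum_eq_zero fun i hi => hf i (mem_Ico.mp hi).1
    omega
  have hsM : ∑ i ∈ range M, (ρ i + σ i) = ∑ i ∈ range M, (μ i + ν i) := by
    rw [hext _ hρ, hext _ hμ, hsum]
  have e1 := Finset.sum_range_add_sum_Ico (fun i => ρ i + σ i) (Nat.le_of_succ_le hkM)
  have e1' := Finset.sum_range_add_sum_Ico (fun i => μ i + ν i) (Nat.le_of_succ_le hkM)
  have e2 := Finset.sum_range_add_sum_Ico (fun i => ρ i + σ i) hkM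
  have e2' := Finset.sum_range_add_sum_Ico (fun i => μ i + ν i) hkM
  have s2 := Finset.sum_range_succ (fun i => ρ i + σ i) k
  have s2' := Finset.sum_range_succ (fun i => μ i + ν i) k
  have hIco2 : ∑ i ∈ Ico (k+1) M, (μ i + ν i) ≤ ∑ i ∈ Ico (k+1) M, (ρ i + σ i) := by
    refine Finset.sum_le_sum fun i hi => ?_
    have hk := (mem_Ico.mp hi).1
    have := hA i (by omega)
    have := hB i
    omega
  constructor
  · rcases Nat.eq_zero_or_pos k with rfl | hk
    · simp
    · have hIco1 : ∑ i ∈ Ico k M, (μ i + ν i) ≤ ∑ i ∈ Ico k M, (ρ i + σ i) := by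
        refine Finset.sum_le_sum fun i hi => ?_
        have hki := (mem_Ico.mp hi).1
        have := hA i (by omega)
        have := hB i
        omega
      omega
  · have := hB k
    omega

/-- for the set of bipartitions (η,ξ) of l with η' ⪯ η and
ξ ⪯ ξ', the bipartition ((l−l') ∪ η', ξ') is its minimum and
((l−l'+ξ'_1+η'_1, η'_2,...,η'_r), (ξ'_2,...,ξ'_r)) its maximum, for the
Achar–Henderson order. -/
theorem stmt14 (l l' r : ℕ) (ξ' η' : ℕ → ℕ)
    (hξ'_dec : ∀ i, ξ' (i + 1) ≤ ξ' i) (hη'_dec : ∀ i, η' (i + 1) ≤ η' i)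
    (hξ'_supp : ∀ i, r ≤ i → ξ' i = 0) (hη'_supp : ∀ i, r ≤ i → η' i = 0)
    (hl' : ∑ i ∈ range r, ξ' i + ∑ i ∈ range r, η' i = l')
    (hstab : 2 * l' ≤ l) :
    let Θ : (ℕ → ℕ) → (ℕ → ℕ) → Prop := fun η ξ =>
      (∀ i, η (i + 1) ≤ η i) ∧ (∀ i, ξ (i + 1) ≤ ξ i) ∧
      (∀ i, r + 1 ≤ i → η i = 0) ∧ (∀ i, r ≤ i → ξ i = 0) ∧
      (∑ i ∈ range (r + 1), η i + ∑ i ∈ range r, ξ i = l) ∧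
      Prec η' η ∧ Prec ξ ξ'
    let ηmin : ℕ → ℕ := fun i => if i = 0 then l - l' else η' (i - 1)
    let ηmax : ℕ → ℕ := fun i => if i = 0 then l - l' + ξ' 0 + η' 0 else η' i
    let ξmax : ℕ → ℕ := fun i => ξ' (i + 1)
    Θ ηmin ξ' ∧ (∀ η ξ, Θ η ξ → AHle ηmin ξ' η ξ) ∧
    Θ ηmax ξmax ∧ (∀ η ξ, Θ η ξ → AHle η ξ ηmax ξmax) := by
  intro Θ ηmin ηmax ξmax
  have hη'0 : η' 0 ≤ l' := by
    rcases Nat.eq_zero_or_pos r with h | h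
    · rw [hη'_supp 0 (by omega)]; omega
    · have := Finset.single_le_sum (f := η') (fun i _ => Nat.zero_le _)
        (mem_range.mpr h)
      omega
  have hξ'0 : ξ' 0 ≤ l' := by
    rcases Nat.eq_zero_or_pos r with h | h
    · rw [hξ'_supp 0 (by omega)]; omega
    · have := Finset.single_le_sum (f := ξ') (fun i _ => Nat.zero_le _)
        (mem_range.mpr h)
      omega
  -- shifted sums
  have hη'shift : ∑ i ∈ range r, η' (i + 1) + η' 0 = ∑ i ∈ range r, η' i := by
    have h1 := Finset.sum_range_succ' η' r
    have h2 := Finset.sum_range_succ η' r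
    rw [hη'_supp r le_rfl] at h2
    omega
  have hξ'shift : ∑ i ∈ range r, ξ' (i + 1) + ξ' 0 = ∑ i ∈ range r, ξ' i := by
    have h1 := Finset.sum_range_succ' ξ' r
    have h2 := Finset.sum_range_succ ξ' r
    rw [hξ'_supp r le_rfl] at h2
    omega
  -- sums of extremal sequences
  have hηmin_sum : ∑ i ∈ range (r + 1), ηmin i = (l - l') + ∑ i ∈ range r, η' i := by
    rw [Finset.sum_range_succ' ηmin r]
    have : ∀ i, ηmin (i + 1) = η' i := fun i => by simp [ηmin]
    simp only [this]
    simp [ηmin]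
    omega
  have hηmax_sum : ∑ i ∈ range (r + 1), ηmax i
      = (l - l' + ξ' 0 + η' 0) + ∑ i ∈ range r, η' (i + 1) := by
    rw [Finset.sum_range_succ' ηmax r]
    have : ∀ i, ηmax (i + 1) = η' (i + 1) := fun i => by simp [ηmax]
    simp only [this]
    simp [ηmax]
    omega
  refine ⟨?_, ?_, ?_, ?_⟩
  · -- Θ ηmin ξ'
    refine ⟨?_, hξ'_dec, ?_, hξ'_supp, ?_, ?_, fun i => ⟨hξ'_dec i, le_rfl⟩⟩
    · intro i
      rcases i with _ | j
      · simp only [ηmin]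
        simp
        omega
      · simp only [ηmin]
        simp
        exact hη'_dec j
    · intro i hi
      have : i ≠ 0 := by omega
      simp only [ηmin, if_neg this]
      exact hη'_supp _ (by omega)
    · rw [hηmin_sum]; omega
    · intro i
      constructor
      · show ηmin (i + 1) ≤ η' i
        simp [ηmin]
      · rcases i with _ | j
        · show η' 0 ≤ ηmin 0
          simp only [ηmin]
          simp
          omega
        · show η' (j + 1) ≤ ηmin (j + 1)
          simp only [ηmin]
          simp
          exact hη'_dec j
  · -- minimality
    intro η ξ hΘ
    obtain ⟨hηd, hξd, hηs, hξs, hsum, hPη, hPξ⟩ := hΘ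
    refine AHle_key (r + 1) _ _ _ _ ?_ ?_ ?_ ?_ ?_
    · have h1 : ∑ i ∈ range (r + 1), (ηmin i + ξ' i)
          = ∑ i ∈ range (r + 1), ηmin i + ∑ i ∈ range (r + 1), ξ' i :=
        Finset.sum_add_distrib
      have h2 : ∑ i ∈ range (r + 1), (η i + ξ i)
          = ∑ i ∈ range (r + 1), η i + ∑ i ∈ range (r + 1), ξ i :=
        Finset.sum_add_distrib
      have h3 := Finset.sum_range_succ ξ' r
      have h4 := Finset.sum_range_succ ξ r
      rw [hξ'_supp r le_rfl] at h3
      rw [hξs r le_rfl] at h4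
      rw [h1, h2, hηmin_sum]
      omega
    · intro i hi
      have hne : i ≠ 0 := by omega
      simp only [ηmin, if_neg hne]
      rw [hη'_supp _ (by omega), hξ'_supp _ (by omega)]
    · intro i hi
      rw [hηs i hi, hξs i (by omega)]
    · intro i hi
      obtain ⟨j, rfl⟩ := Nat.exists_eq_add_of_le hi
      have := (hPη j).1
      show η (1 + j) ≤ ηmin (1 + j)
      have h1j : 1 + j = j + 1 := by omega
      rw [h1j]
      simp only [ηmin]
      simp
      exact (hPη j).1
    · exact fun i => (hPξ i).2
  · -- Θ ηmax ξmax
    refine ⟨?_, fun i => hξ'_dec (i + 1), ?_, fun i hi => hξ'_supp _ (by omega), ?_, ?_,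
      fun i => ⟨le_rfl, hξ'_dec i⟩⟩
    · intro i
      rcases i with _ | j
      · simp only [ηmax]
        simp
        have h10 : η' 1 ≤ η' 0 := hη'_dec 0
        omega
      · simp only [ηmax]
        simp
        exact hη'_dec (j + 1)
    · intro i hi
      have hne : i ≠ 0 := by omega
      simp only [ηmax, if_neg hne]
      exact hη'_supp _ (by omega)
    · rw [hηmax_sum]
      show _ + ∑ i ∈ range r, ξ' (i + 1) = l
      omega
    · intro i
      rcases i with _ | j
      · refine ⟨?_, ?_⟩
        · show ηmax 1 ≤ η' 0
          simp only [ηmax]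
          simp
          exact hη'_dec 0
        · show η' 0 ≤ ηmax 0
          simp only [ηmax]
          simp
      · refine ⟨?_, ?_⟩
        · show ηmax (j + 2) ≤ η' (j + 1)
          simp only [ηmax]
          simp
          exact hη'_dec (j + 1)
        · show η' (j + 1) ≤ ηmax (j + 1)
          simp [ηmax]
  · -- maximality
    intro η ξ hΘ
    obtain ⟨hηd, hξd, hηs, hξs, hsum, hPη, hPξ⟩ := hΘ
    refine AHle_key (r + 1) _ _ _ _ ?_ ?_ ?_ ?_ ?_
    · have h1 : ∑ i ∈ range (r + 1), (η i + ξ i)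
          = ∑ i ∈ range (r + 1), η i + ∑ i ∈ range (r + 1), ξ i :=
        Finset.sum_add_distrib
      have h2 : ∑ i ∈ range (r + 1), (ηmax i + ξmax i)
          = ∑ i ∈ range (r + 1), ηmax i + ∑ i ∈ range (r + 1), ξmax i :=
        Finset.sum_add_distrib
      have h4 := Finset.sum_range_succ ξ r
      rw [hξs r le_rfl] at h4
      have h5 : ∑ i ∈ range (r + 1), ξmax i = ∑ i ∈ range r, ξ' (i + 1) := by
        have := Finset.sum_range_succ (fun i => ξ' (i + 1)) r
        have h6 : ξ' (r + 1) = 0 := hξ'_supp _ (by omega)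
        show ∑ i ∈ range (r + 1), ξ' (i + 1) = _
        omega
      rw [h1, h2, hηmax_sum, h5]
      omega
    · intro i hi
      rw [hηs i hi, hξs i (by omega)]
    · intro i hi
      have hne : i ≠ 0 := by omega
      simp only [ηmax, if_neg hne]
      show η' i + ξ' (i + 1) = 0
      rw [hη'_supp _ (by omega), hξ'_supp _ (by omega)]
    · intro i hi
      have hne : i ≠ 0 := by omega
      simp only [ηmax, if_neg hne]
      exact (hPη i).2
    · exact fun i => (hPξ i).1
end

section
/- Fix k and an odd t. Let μ and μ' be partitions with 2-core τ_k, with 2-quotients (computed from t-sets of β-numbers) (η, ξ) and (η, ξ') respectively (same first quotient component). If ξ ≤ ξ' in the dominance order (and |ξ| = |ξ'|), then μ ≤ μ' in the dominance order. -/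
open Finset

/-- The t-set of β-numbers. -/
def betaSet (t : ℕ) (μ : ℕ → ℕ) : Finset ℕ :=
  (Finset.range t).image (fun i => μ i + (t - 1 - i))

private lemma F_mono (a a' : ℕ → ℕ) (n m : ℕ) (ha : ∀ i, a (i + 1) ≤ a i)
    (hdom : ∀ j, j ≤ n → ∑ i ∈ range j, a i ≤ ∑ i ∈ range j, a' i) :
    ∑ i ∈ range n, (a i - m) ≤ ∑ i ∈ range n, (a' i - m) := by
  have haa : Antitone a := antitone_nat_of_succ_le ha
  classical
  set P : ℕ → Prop := fun j => ∀ i < j, m < a i with hP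
  have hP0 : P 0 := by intro i h; omega
  set j := Nat.findGreatest P n with hjdef
  have hjn : j ≤ n := Nat.findGreatest_le n
  have hPj : P j := Nat.findGreatest_spec (Nat.zero_le n) hP0
  have hle : ∀ i, j ≤ i → i < n → a i ≤ m := by
    intro i hji hin
    by_contra hcon
    push_neg at hcon
    have hj1 : P (j + 1) := by
      intro i' hi'
      rcases Nat.lt_succ_iff_lt_or_eq.mp hi' with h' | h'
      · exact hPj _ h'
      · subst h'; exact lt_of_lt_of_le hcon (haa hji)
    exact Nat.findGreatest_is_greatest (Nat.lt_succ_self j) (by omega) hj1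
  have hz : ∀ i ∈ Ico j n, a i - m = 0 := by
    intro i hi
    rw [mem_Ico] at hi
    have := hle i hi.1 hi.2
    omega
  have hsplit : ∑ i ∈ range n, (a i - m) = ∑ i ∈ range j, (a i - m) := by
    rw [← Finset.sum_range_add_sum_Ico _ hjn, Finset.sum_eq_zero hz, add_zero]
  have key : ∑ i ∈ range j, (a i - m) + j * m = ∑ i ∈ range j, a i := by
    have h1 : ∑ i ∈ range j, (a i - m + m) = ∑ i ∈ range j, a i :=
      Finset.sum_congr rfl (fun i hi => by
        have := hPj i (mem_range.mp hi); omega)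
    calc ∑ i ∈ range j, (a i - m) + j * m
        = ∑ i ∈ range j, (a i - m + m) := by
          rw [Finset.sum_add_distrib, Finset.sum_const, card_range, smul_eq_mul]
      _ = ∑ i ∈ range j, a i := h1
  have key' : ∑ i ∈ range j, a' i ≤ ∑ i ∈ range n, (a' i - m) + j * m := by
    calc ∑ i ∈ range j, a' i ≤ ∑ i ∈ range j, (a' i - m + m) :=
          Finset.sum_le_sum (fun i _ => by omega)
      _ = ∑ i ∈ range j, (a' i - m) + j * m := by
          rw [Finset.sum_add_distrib, Finset.sum_const, card_range, smul_eq_mul]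
      _ ≤ ∑ i ∈ range n, (a' i - m) + j * m := by
          exact Nat.add_le_add_right
            (Finset.sum_le_sum_of_subset (range_subset_range.mpr hjn)) _
  have hd := hdom j hjn
  set c := j * m
  omega

private lemma strictAnti_aux (f : ℕ → ℕ) (n : ℕ) (hf : ∀ i, f (i + 1) ≤ f i) :
    ∀ i i', i < i' → i' < n → f i' + (n - 1 - i') < f i + (n - 1 - i) := by
  intro i i' h h'
  have hmono : Antitone f := antitone_nat_of_succ_le hf
  have := hmono h.le
  omega

private lemma betaSum_eq (t t₀ t₁ : ℕ) (η ξ μ : ℕ → ℕ)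
    (hμ_dec : ∀ i, μ (i + 1) ≤ μ i)
    (hη_dec : ∀ i, η (i + 1) ≤ η i) (hξ_dec : ∀ i, ξ (i + 1) ≤ ξ i)
    (hβ : (Finset.range t).image (fun i => μ i + (t - 1 - i)) =
      (Finset.range t₀).image (fun i => 2 * (η i + (t₀ - 1 - i))) ∪
      (Finset.range t₁).image (fun i => 2 * (ξ i + (t₁ - 1 - i)) + 1)) (m : ℕ) :
    ∑ i ∈ range t, (μ i + (t - 1 - i) - m) =
      (∑ i ∈ range t₀, (2 * (η i + (t₀ - 1 - i)) - m)) +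
      ∑ i ∈ range t₁, (2 * (ξ i + (t₁ - 1 - i)) + 1 - m) := by
  have hinjb : ∀ x ∈ range t, ∀ y ∈ range t,
      μ x + (t - 1 - x) = μ y + (t - 1 - y) → x = y := by
    intro x hx y hy hxy
    rw [mem_range] at hx hy
    rcases lt_trichotomy x y with h | h | h
    · have := strictAnti_aux μ t hμ_dec x y h hy; omega
    · exact h
    · have := strictAnti_aux μ t hμ_dec y x h hx; omega
  have hinje : ∀ x ∈ range t₀, ∀ y ∈ range t₀,
      2 * (η x + (t₀ - 1 - x)) = 2 * (η y + (t₀ - 1 - y)) → x = y := by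
    intro x hx y hy hxy
    rw [mem_range] at hx hy
    rcases lt_trichotomy x y with h | h | h
    · have := strictAnti_aux η t₀ hη_dec x y h hy; omega
    · exact h
    · have := strictAnti_aux η t₀ hη_dec y x h hx; omega
  have hinjo : ∀ x ∈ range t₁, ∀ y ∈ range t₁,
      2 * (ξ x + (t₁ - 1 - x)) + 1 = 2 * (ξ y + (t₁ - 1 - y)) + 1 → x = y := by
    intro x hx y hy hxy
    rw [mem_range] at hx hy
    rcases lt_trichotomy x y with h | h | h
    · have := strictAnti_aux ξ t₁ hξ_dec x y h hy; omega
    · exact h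
    · have := strictAnti_aux ξ t₁ hξ_dec y x h hx; omega
  have hdisj : Disjoint ((Finset.range t₀).image (fun i => 2 * (η i + (t₀ - 1 - i))))
      ((Finset.range t₁).image (fun i => 2 * (ξ i + (t₁ - 1 - i)) + 1)) := by
    rw [Finset.disjoint_left]
    intro x hx hx'
    simp only [mem_image, mem_range] at hx hx'
    obtain ⟨i, _, hi⟩ := hx
    obtain ⟨i', _, hi'⟩ := hx'
    omega
  calc ∑ i ∈ range t, (μ i + (t - 1 - i) - m)
      = ∑ x ∈ (Finset.range t).image (fun i => μ i + (t - 1 - i)), (x - m) :=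
        by rw [Finset.sum_image hinjb]
    _ = _ := by
        rw [hβ, Finset.sum_union hdisj, Finset.sum_image hinje, Finset.sum_image hinjo]

private lemma dom_of_F (b b' : ℕ → ℕ) (t : ℕ)
    (hb'step : ∀ i, b' (i + 1) ≤ b' i)
    (hF : ∀ m, ∑ i ∈ range t, (b i - m) ≤ ∑ i ∈ range t, (b' i - m)) :
    ∀ k, k ≤ t → ∑ i ∈ range k, b i ≤ ∑ i ∈ range k, b' i := by
  intro k hk
  have hb'anti : Antitone b' := antitone_nat_of_succ_le hb'step
  set m : ℕ := if k < t then b' k else 0 with hm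
  have hP1 : ∑ i ∈ range k, b i ≤ k * m + ∑ i ∈ range t, (b i - m) := by
    calc ∑ i ∈ range k, b i ≤ ∑ i ∈ range k, (m + (b i - m)) :=
          Finset.sum_le_sum (fun i _ => by omega)
      _ = k * m + ∑ i ∈ range k, (b i - m) := by
          rw [Finset.sum_add_distrib, Finset.sum_const, card_range, smul_eq_mul]
      _ ≤ k * m + ∑ i ∈ range t, (b i - m) :=
          Nat.add_le_add_left (Finset.sum_le_sum_of_subset (range_subset_range.mpr hk)) _
  have hP2 : k * m + ∑ i ∈ range t, (b' i - m) ≤ ∑ i ∈ range k, b' i := by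
    by_cases h : k < t
    · have hm' : m = b' k := by rw [hm, if_pos h]
      have hz : ∀ i ∈ Ico k t, b' i - m = 0 := by
        intro i hi
        rw [mem_Ico] at hi
        have := hb'anti hi.1
        omega
      have hsplit : ∑ i ∈ range t, (b' i - m) = ∑ i ∈ range k, (b' i - m) := by
        rw [← Finset.sum_range_add_sum_Ico _ hk, Finset.sum_eq_zero hz, add_zero]
      rw [hsplit]
      apply le_of_eq
      calc k * m + ∑ i ∈ range k, (b' i - m)
          = ∑ i ∈ range k, (m + (b' i - m)) := by
            rw [Finset.sum_add_distrib, Finset.sum_const, card_range, smul_eq_mul]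
        _ = ∑ i ∈ range k, b' i := Finset.sum_congr rfl (fun i hi => by
            have h1 : b' k ≤ b' i := hb'anti (mem_range.mp hi).le
            omega)
    · have hkt : k = t := by omega
      have hm0 : m = 0 := by rw [hm, if_neg h]
      subst hkt
      simp [hm0]
  calc ∑ i ∈ range k, b i ≤ k * m + ∑ i ∈ range t, (b i - m) := hP1
    _ ≤ k * m + ∑ i ∈ range t, (b' i - m) := Nat.add_le_add_left (hF m) _
    _ ≤ ∑ i ∈ range k, b' i := hP2


/-- if μ and μ' are partitions with 2-core τ_k whose 2-quotients
(computed from t-sets of β-numbers, t odd) are (η,ξ) and (η,ξ') with the same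
first component, and ξ ≤ ξ' in the dominance order with |ξ| = |ξ'|, then
μ ≤ μ' in the dominance order. The β-sets of μ and μ' are expressed from
the quotients as {2(η_i + t₀ − i)} ∪ {2(ξ_i + t₁ − i) + 1}. -/
theorem stmt15 (t t₀ t₁ : ℕ) (ht : Odd t) (htt : t₀ + t₁ = t)
    (η ξ ξ' μ μ' : ℕ → ℕ)
    (hη_dec : ∀ i, η (i + 1) ≤ η i)
    (hξ_dec : ∀ i, ξ (i + 1) ≤ ξ i) (hξ'_dec : ∀ i, ξ' (i + 1) ≤ ξ' i)
    (hμ_dec : ∀ i, μ (i + 1) ≤ μ i) (hμ'_dec : ∀ i, μ' (i + 1) ≤ μ' i)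
    (hη_supp : ∀ i, t₀ ≤ i → η i = 0)
    (hξ_supp : ∀ i, t₁ ≤ i → ξ i = 0) (hξ'_supp : ∀ i, t₁ ≤ i → ξ' i = 0)
    (hμ_supp : ∀ i, t ≤ i → μ i = 0) (hμ'_supp : ∀ i, t ≤ i → μ' i = 0)
    (hβ : betaSet t μ =
      (Finset.range t₀).image (fun i => 2 * (η i + (t₀ - 1 - i))) ∪
      (Finset.range t₁).image (fun i => 2 * (ξ i + (t₁ - 1 - i)) + 1))
    (hβ' : betaSet t μ' =
      (Finset.range t₀).image (fun i => 2 * (η i + (t₀ - 1 - i))) ∪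
      (Finset.range t₁).image (fun i => 2 * (ξ' i + (t₁ - 1 - i)) + 1))
    (hsize : ∑ i ∈ range t₁, ξ i = ∑ i ∈ range t₁, ξ' i)
    (hdom : ∀ k, ∑ i ∈ range k, ξ i ≤ ∑ i ∈ range k, ξ' i) :
    ∀ k, ∑ i ∈ range k, μ i ≤ ∑ i ∈ range k, μ' i := by
  have hFμ := betaSum_eq t t₀ t₁ η ξ μ hμ_dec hη_dec hξ_dec hβ
  have hFμ' := betaSum_eq t t₀ t₁ η ξ' μ' hμ'_dec hη_dec hξ'_dec hβ'
  have hdomo : ∀ j, j ≤ t₁ →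
      ∑ i ∈ range j, (2 * (ξ i + (t₁ - 1 - i)) + 1) ≤
      ∑ i ∈ range j, (2 * (ξ' i + (t₁ - 1 - i)) + 1) := by
    intro j hj
    have h1 : ∀ ζ : ℕ → ℕ, ∑ i ∈ range j, (2 * (ζ i + (t₁ - 1 - i)) + 1) =
        2 * (∑ i ∈ range j, ζ i) + ∑ i ∈ range j, (2 * (t₁ - 1 - i) + 1) := by
      intro ζ
      rw [Finset.mul_sum, ← Finset.sum_add_distrib]
      exact Finset.sum_congr rfl (fun i _ => by ring)
    rw [h1 ξ, h1 ξ']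
    have := hdom j
    omega
  have hFcmp : ∀ m, ∑ i ∈ range t, (μ i + (t - 1 - i) - m) ≤
      ∑ i ∈ range t, (μ' i + (t - 1 - i) - m) := by
    intro m
    rw [hFμ m, hFμ' m]
    refine Nat.add_le_add_left ?_ _
    exact F_mono (fun i => 2 * (ξ i + (t₁ - 1 - i)) + 1)
      (fun i => 2 * (ξ' i + (t₁ - 1 - i)) + 1) t₁ m
      (fun i => by
        show 2 * (ξ (i + 1) + (t₁ - 1 - (i + 1))) + 1 ≤ 2 * (ξ i + (t₁ - 1 - i)) + 1
        have := hξ_dec i; omega) hdomo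
  have key : ∀ k, k ≤ t → ∑ i ∈ range k, μ i ≤ ∑ i ∈ range k, μ' i := by
    intro k hk
    have h := dom_of_F (fun i => μ i + (t - 1 - i)) (fun i => μ' i + (t - 1 - i)) t
      (fun i => by
        show μ' (i + 1) + (t - 1 - (i + 1)) ≤ μ' i + (t - 1 - i)
        have := hμ'_dec i; omega) hFcmp k hk
    have e1 : ∑ i ∈ range k, (μ i + (t - 1 - i)) =
        ∑ i ∈ range k, μ i + ∑ i ∈ range k, (t - 1 - i) := Finset.sum_add_distrib
    have e2 : ∑ i ∈ range k, (μ' i + (t - 1 - i)) =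
        ∑ i ∈ range k, μ' i + ∑ i ∈ range k, (t - 1 - i) := Finset.sum_add_distrib
    beta_reduce at h
    omega
  intro k
  rcases le_or_gt k t with hk | hk
  · exact key k hk
  · have h1 : ∑ i ∈ range k, μ i = ∑ i ∈ range t, μ i := by
      rw [← Finset.sum_range_add_sum_Ico _ hk.le,
        Finset.sum_eq_zero (fun i hi => hμ_supp i (mem_Ico.mp hi).1), add_zero]
    have h2 : ∑ i ∈ range k, μ' i = ∑ i ∈ range t, μ' i := by
      rw [← Finset.sum_range_add_sum_Ico _ hk.le,
        Finset.sum_eq_zero (fun i hi => hμ'_supp i (mem_Ico.mp hi).1), add_zero]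
    rw [h1, h2]
    exact key t le_rfl
end

section
/- Let λ be a symplectic partition of 2n with 2k parts (padding with a zero if needed), and set λ*_j = λ_{2k−j+1} + j − 1 for j = 1,...,2k. Then λ* has exactly k odd entries and k even entries. -/
open Finset

lemma count_odd_range (n : ℕ) :
    ((range n).filter (fun i => i % 2 = 1)).card = n / 2 := by
  induction n with
  | zero => simp
  | succ n ih =>
    rw [range_add_one, filter_insert]
    by_cases h : n % 2 = 1
    · rw [if_pos h, card_insert_of_notMem (by simp)]; omega
    · rw [if_neg h]; omega

lemma count_even_range (n : ℕ) :
    ((range n).filter (fun i => i % 2 = 0)).card = n - n / 2 := by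
  have h := card_filter_add_card_filter_not
    (s := range n) (p := fun i => i % 2 = 1)
  have h2 : (range n).filter (fun i => ¬ i % 2 = 1)
      = (range n).filter (fun i => i % 2 = 0) := by
    apply filter_congr; intro i _; constructor <;> intro <;> omega
  rw [h2, count_odd_range, card_range] at h
  omega

lemma downset_eq_range (s : Finset ℕ) (h : ∀ i j, j ≤ i → i ∈ s → j ∈ s) :
    s = range s.card := by
  have hsub : s ⊆ range s.card := by
    intro x hx
    rw [mem_range]
    have hr : range (x + 1) ⊆ s := by
      intro y hy
      exact h x y (by simpa [Nat.lt_succ_iff] using hy) hx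
    have := card_le_card hr
    simpa using this
  exact eq_of_subset_of_card_le hsub (by simp)

lemma fiber_split (N : ℕ) (lam : ℕ → ℕ) (hant : ∀ i j, i ≤ j → lam j ≤ lam i) (m : ℕ)
    (hev : Even (((range N).filter (fun j => lam j = m)).card)) :
    (((range N).filter (fun j => lam j = m)).filter (fun i => i % 2 = 1)).card
      = (((range N).filter (fun j => lam j = m)).filter (fun i => i % 2 = 0)).card := by
  set a := ((range N).filter (fun j => m + 1 ≤ lam j)).card with ha
  set b := ((range N).filter (fun j => m ≤ lam j)).card with hb
  have hra : (range N).filter (fun j => m + 1 ≤ lam j) = range a := by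
    apply downset_eq_range
    intro i j hji hi
    simp only [mem_filter, mem_range] at hi ⊢
    exact ⟨lt_of_le_of_lt hji hi.1, le_trans hi.2 (hant j i hji)⟩
  have hrb : (range N).filter (fun j => m ≤ lam j) = range b := by
    apply downset_eq_range
    intro i j hji hi
    simp only [mem_filter, mem_range] at hi ⊢
    exact ⟨lt_of_le_of_lt hji hi.1, le_trans hi.2 (hant j i hji)⟩
  have hab : a ≤ b := by
    apply card_le_card
    intro i hi
    simp only [mem_filter, mem_range] at hi ⊢
    omega
  have hfib : (range N).filter (fun j => lam j = m) = range b \ range a := by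
    rw [← hra, ← hrb]
    ext i
    simp only [mem_filter, mem_range, mem_sdiff]
    omega
  have hsd : ∀ (p : ℕ → Prop) [DecidablePred p],
      (range b \ range a).filter p = (range b).filter p \ (range a).filter p := by
    intro p _
    ext i
    simp only [mem_filter, mem_sdiff]
    tauto
  have hsub1 : (range a).filter (fun i => i % 2 = 1) ⊆ (range b).filter (fun i => i % 2 = 1) :=
    filter_subset_filter _ (range_subset_range.2 hab)
  have hsub0 : (range a).filter (fun i => i % 2 = 0) ⊆ (range b).filter (fun i => i % 2 = 0) :=
    filter_subset_filter _ (range_subset_range.2 hab)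
  have hcard : ((range N).filter (fun j => lam j = m)).card = b - a := by
    rw [hfib, card_sdiff_of_subset (range_subset_range.2 hab), card_range, card_range]
  rw [hcard] at hev
  obtain ⟨t, ht⟩ := hev
  rw [hfib, hsd, hsd, card_sdiff_of_subset hsub1, card_sdiff_of_subset hsub0,
    count_odd_range, count_odd_range, count_even_range, count_even_range]
  omega

lemma key_split (N : ℕ) (lam : ℕ → ℕ) (hant : ∀ i j, i ≤ j → lam j ≤ lam i)
    (hsymp : ∀ m, Odd m → Even (((range N).filter (fun j => lam j = m)).card)) :
    ((range N).filter (fun i => lam i % 2 = 1 ∧ i % 2 = 1)).card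
      = ((range N).filter (fun i => lam i % 2 = 1 ∧ i % 2 = 0)).card := by
  set A := (range N).filter (fun i => lam i % 2 = 1) with hA
  have e1 : (range N).filter (fun i => lam i % 2 = 1 ∧ i % 2 = 1)
      = A.filter (fun i => i % 2 = 1) := by rw [hA, filter_filter]
  have e0 : (range N).filter (fun i => lam i % 2 = 1 ∧ i % 2 = 0)
      = A.filter (fun i => i % 2 = 0) := by rw [hA, filter_filter]
  rw [e1, e0]
  have hm1 : ∀ x ∈ A.filter (fun i => i % 2 = 1), lam x ∈ A.image lam := by
    intro x hx; exact mem_image_of_mem _ (filter_subset _ _ hx)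
  have hm0 : ∀ x ∈ A.filter (fun i => i % 2 = 0), lam x ∈ A.image lam := by
    intro x hx; exact mem_image_of_mem _ (filter_subset _ _ hx)
  rw [card_eq_sum_card_fiberwise hm1, card_eq_sum_card_fiberwise hm0]
  apply sum_congr rfl
  intro m hm
  obtain ⟨i, hiA, him⟩ := mem_image.mp hm
  have hmodd : m % 2 = 1 := by
    rw [hA, mem_filter] at hiA
    omega
  have h1 : (A.filter (fun i => i % 2 = 1)).filter (fun x => lam x = m)
      = ((range N).filter (fun j => lam j = m)).filter (fun i => i % 2 = 1) := by
    rw [hA]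
    ext x
    simp only [mem_filter, mem_range, filter_filter]
    omega
  have h0 : (A.filter (fun i => i % 2 = 0)).filter (fun x => lam x = m)
      = ((range N).filter (fun j => lam j = m)).filter (fun i => i % 2 = 0) := by
    rw [hA]
    ext x
    simp only [mem_filter, mem_range, filter_filter]
    omega
  rw [h1, h0]
  exact fiber_split N lam hant m (hsymp m (Nat.odd_iff.mpr hmodd))

/-- let λ be a symplectic partition of 2n with 2k parts and set
λ*_j = λ_{2k−j+1} + j − 1 for j = 1,...,2k. Then λ* has exactly k odd and
k even entries. (0-indexed: λ* j = λ (2k−1−j) + j for j = 0,...,2k−1.) -/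
theorem stmt17 (n k : ℕ) (lam : ℕ → ℕ)
    (hdec : ∀ i, lam (i + 1) ≤ lam i)
    (hsupp : ∀ i, 2 * k ≤ i → lam i = 0)
    (hsum : ∑ i ∈ range (2 * k), lam i = 2 * n)
    (hsymp : ∀ m, Odd m →
      Even (((range (2 * k)).filter (fun j => lam j = m)).card)) :
    ((range (2 * k)).filter (fun j => (lam (2 * k - 1 - j) + j) % 2 = 1)).card = k ∧
    ((range (2 * k)).filter (fun j => (lam (2 * k - 1 - j) + j) % 2 = 0)).card = k := by
  have hant : ∀ i j, i ≤ j → lam j ≤ lam i := fun i j h =>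
    antitone_nat_of_succ_le hdec h
  -- step 1: reindex to the condition lam i % 2 = i % 2
  have hre : ((range (2 * k)).filter (fun j => (lam (2 * k - 1 - j) + j) % 2 = 1)).card
      = ((range (2 * k)).filter (fun i => lam i % 2 = i % 2)).card := by
    apply card_nbij' (fun j => 2 * k - 1 - j) (fun i => 2 * k - 1 - i)
    · intro j hj
      simp only [mem_coe, mem_filter, mem_range] at hj ⊢
      obtain ⟨hj1, hj2⟩ := hj
      constructor
      · omega
      · omega
    · intro i hi
      simp only [mem_coe, mem_filter, mem_range] at hi ⊢
      obtain ⟨hi1, hi2⟩ := hi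
      have hco : 2 * k - 1 - (2 * k - 1 - i) = i := by omega
      rw [hco]
      omega
    · intro j hj
      simp only [mem_coe, mem_filter, mem_range] at hj
      dsimp only
      omega
    · intro i hi
      simp only [mem_coe, mem_filter, mem_range] at hi
      dsimp only
      omega
  -- step 2: count the reindexed condition
  have hkey := key_split (2 * k) lam hant hsymp
  set o1 := ((range (2 * k)).filter (fun i => lam i % 2 = 1 ∧ i % 2 = 1)).card with ho1
  set o0 := ((range (2 * k)).filter (fun i => lam i % 2 = 1 ∧ i % 2 = 0)).card with ho0
  set e1 := ((range (2 * k)).filter (fun i => lam i % 2 = 0 ∧ i % 2 = 1)).card with he1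
  set e0 := ((range (2 * k)).filter (fun i => lam i % 2 = 0 ∧ i % 2 = 0)).card with he0
  have hodd : o1 + e1 = k := by
    have hc : ((range (2 * k)).filter (fun i => i % 2 = 1)).card = k := by
      rw [count_odd_range]; omega
    have hs : o1 + e1 = ((range (2 * k)).filter (fun i => i % 2 = 1)).card := by
      rw [ho1, he1, card_filter, card_filter, card_filter, ← sum_add_distrib]
      exact sum_congr rfl (fun i _ => by split_ifs <;> omega)
    rw [hs, hc]
  have htot : o1 + o0 + e1 + e0 = 2 * k := by
    have : o1 + o0 + e1 + e0 = ∑ i ∈ range (2 * k), 1 := by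
      rw [ho1, ho0, he1, he0, card_filter, card_filter, card_filter, card_filter,
        ← sum_add_distrib, ← sum_add_distrib, ← sum_add_distrib]
      apply sum_congr rfl
      intro i _
      split_ifs <;> omega
    rw [this, sum_const, card_range, smul_eq_mul, mul_one]
  have hT : ((range (2 * k)).filter (fun i => lam i % 2 = i % 2)).card = o1 + e0 := by
    rw [ho1, he0, card_filter, card_filter, card_filter, ← sum_add_distrib]
    apply sum_congr rfl
    intro i _
    split_ifs <;> omega
  have h1 : ((range (2 * k)).filter (fun j => (lam (2 * k - 1 - j) + j) % 2 = 1)).card = k := by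
    rw [hre, hT]
    omega
  refine ⟨h1, ?_⟩
  have hc2 := card_filter_add_card_filter_not
    (s := range (2 * k)) (p := fun j => (lam (2 * k - 1 - j) + j) % 2 = 1)
  have hc3 : (range (2 * k)).filter (fun j => ¬ (lam (2 * k - 1 - j) + j) % 2 = 1)
      = (range (2 * k)).filter (fun j => (lam (2 * k - 1 - j) + j) % 2 = 0) := by
    apply filter_congr; intro j _; constructor <;> intro <;> omega
  rw [hc3, h1, card_range] at hc2
  omega
end

section
/- Let ζ and ζ' be partitions of the same integer with k parts, and ξ' a partition with k+1 parts, such that both u-symbols (top row ξ'_{k+1}, ξ'_k+2, ..., ξ'_1+2k; bottom rows from ζ resp. ζ') give multisets γ and γ' of 2k+1 entries. If ζ ≤ ζ' in the dominance order, then the decreasing rearrangements satisfy γ_1 + ⋯ + γ_r ≤ γ'_1 + ⋯ + γ'_r for every r = 1,...,2k+1. -/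
open Finset

/-- The multiset of entries of the u-symbol of (ξ,ζ), with ξ of k+1 parts and
ζ of k parts: top entries ξ_{k+1−i} + 2i (i = 0,...,k), bottom entries
ζ_{k−i} + 2i + 1 (i = 0,...,k−1). -/
def usymbolEntries (k : ℕ) (ξ ζ : ℕ → ℕ) : Multiset ℕ :=
  (Multiset.range (k + 1)).map (fun i => ξ (k - i) + 2 * i) +
  (Multiset.range k).map (fun i => ζ (k - 1 - i) + 2 * i + 1)

/-- The sum of the r largest elements of a multiset of naturals, i.e. the r-th
partial sum of its decreasing rearrangement. -/
def topSum (γ : Multiset ℕ) (r : ℕ) : ℕ :=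
  ((γ.sort (· ≤ ·)).reverse.take r).sum

lemma stmt18.aux1 : ∀ (s : ℕ) (l : List ℕ) (a : ℕ), (∀ x ∈ l, x ≤ a) →
    (l.take (s+1)).sum ≤ a + (l.take s).sum := by
  intro s
  induction s with
  | zero =>
    intro l a h
    cases l with
    | nil => simp
    | cons x t => simpa using h x (by simp)
  | succ u ih =>
    intro l a h
    cases l with
    | nil => simp
    | cons x t =>
      simp only [List.take_succ_cons, List.sum_cons]
      have := ih t a (fun y hy => h y (by simp [hy]))
      omega

lemma stmt18.take_sum_le_of_sublist : ∀ {l₁ l₂ : List ℕ}, List.Sublist l₁ l₂ →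
    l₂.Pairwise (· ≥ ·) → ∀ r, (l₁.take r).sum ≤ (l₂.take r).sum := by
  intro l₁ l₂ h
  induction h with
  | slnil => intro _ r; simp
  | @cons l₁ l₂ a h ih =>
    intro hs r
    have h1 := ih hs.of_cons r
    refine h1.trans ?_
    cases r with
    | zero => simp
    | succ s =>
      simp only [List.take_succ_cons, List.sum_cons]
      exact stmt18.aux1 s l₂ a (fun x hx => List.rel_of_pairwise_cons hs hx)
  | @cons_cons l₁ l₂ a h ih =>
    intro hs r
    cases r with
    | zero => simp
    | succ s =>
      simp only [List.take_succ_cons, List.sum_cons]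
      exact Nat.add_le_add_left (ih hs.of_cons s) a

lemma stmt18.dlist_sorted (γ : Multiset ℕ) :
    ((γ.sort (· ≤ ·)).reverse).Pairwise (· ≥ ·) := by
  rw [List.pairwise_reverse]
  exact γ.pairwise_sort (· ≤ ·)

lemma stmt18.sum_le_topSum {S γ : Multiset ℕ} (h : S ≤ γ) {r : ℕ}
    (hr : Multiset.card S ≤ r) : S.sum ≤ topSum γ r := by
  have hsp : List.Subperm (S.sort (· ≤ ·)) (γ.sort (· ≤ ·)) := by
    apply Multiset.coe_le.1
    rwa [Multiset.sort_eq, Multiset.sort_eq]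
  have hsub : List.Sublist (S.sort (· ≤ ·)).reverse (γ.sort (· ≤ ·)).reverse := by
    apply List.sublist_of_subperm_of_pairwise _ (stmt18.dlist_sorted S) (stmt18.dlist_sorted γ)
    exact ((S.sort (· ≤ ·)).reverse_perm.subperm).trans
      (hsp.trans ((γ.sort (· ≤ ·)).reverse_perm.symm.subperm))
  have key := stmt18.take_sum_le_of_sublist hsub (stmt18.dlist_sorted γ) r
  have hlen : ((S.sort (· ≤ ·)).reverse).length ≤ r := by
    simpa using hr
  rw [List.take_of_length_le hlen] at key
  have hSsum : S.sum = ((S.sort (· ≤ ·)).reverse).sum := by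
    rw [List.sum_reverse]
    conv_lhs => rw [← Multiset.sort_eq S (· ≤ ·)]
    rw [Multiset.sum_coe]
  rw [topSum, hSsum]
  exact key

lemma stmt18.exists_topSum (γ : Multiset ℕ) (r : ℕ) : ∃ T : Multiset ℕ,
    T ≤ γ ∧ Multiset.card T ≤ r ∧ T.sum = topSum γ r := by
  refine ⟨↑(((γ.sort (· ≤ ·)).reverse).take r), ?_, ?_, ?_⟩
  · conv_rhs => rw [← Multiset.sort_eq γ (· ≤ ·)]
    apply Multiset.coe_le.2
    exact ((List.take_sublist _ _).subperm).trans ((γ.sort (· ≤ ·)).reverse_perm.subperm)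
  · simp
  · simp [topSum]

lemma stmt18.topSum_add_mono {B B' : Multiset ℕ} (hb : ∀ s, topSum B s ≤ topSum B' s)
    (A : Multiset ℕ) (r : ℕ) : topSum (A + B) r ≤ topSum (A + B') r := by
  obtain ⟨S, hS, hScard, hSsum⟩ := stmt18.exists_topSum (A + B) r
  set S₁ : Multiset ℕ := S ∩ A with hS₁def
  set S₂ : Multiset ℕ := S - A with hS₂def
  have hsplit : S₁ + S₂ = S := by
    ext a
    simp only [Multiset.count_add, hS₁def, hS₂def, Multiset.count_inter, Multiset.count_sub]
    omega
  have hS₁ : S₁ ≤ A := Multiset.inter_le_right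
  have hS₂ : S₂ ≤ B := Multiset.sub_le_iff_le_add.2 (hS.trans (add_comm A B).le)
  obtain ⟨T, hT, hTcard, hTsum⟩ := stmt18.exists_topSum B' (Multiset.card S₂)
  have h1 : S₂.sum ≤ T.sum := by
    rw [hTsum]; exact (stmt18.sum_le_topSum hS₂ le_rfl).trans (hb _)
  have h2 : S₁ + T ≤ A + B' := add_le_add hS₁ hT
  have hcard : Multiset.card (S₁ + T) ≤ r := by
    have := congrArg Multiset.card hsplit
    simp only [Multiset.card_add] at this ⊢
    omega
  calc topSum (A + B) r = S.sum := hSsum.symm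
    _ = S₁.sum + S₂.sum := by rw [← hsplit, Multiset.sum_add]
    _ ≤ S₁.sum + T.sum := Nat.add_le_add_left h1 _
    _ = (S₁ + T).sum := (Multiset.sum_add _ _).symm
    _ ≤ topSum (A + B') r := stmt18.sum_le_topSum h2 hcard

lemma stmt18.bottom_topSum (k : ℕ) (ζ : ℕ → ℕ) (hdec : ∀ i, ζ (i + 1) ≤ ζ i) (r : ℕ) :
    topSum ((Multiset.range k).map (fun i => ζ (k - 1 - i) + 2 * i + 1)) r
      = ∑ j ∈ Finset.range (min r k), (ζ j + (2 * (k - 1 - j) + 1)) := by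
  have hanti : Antitone ζ := antitone_nat_of_succ_le hdec
  set f : ℕ → ℕ := fun i => ζ (k - 1 - i) + 2 * i + 1 with hf
  set L : List ℕ := List.map f (List.range k) with hL
  have hLsorted : L.Pairwise (· ≤ ·) := by
    rw [hL, List.pairwise_map]
    exact (List.pairwise_lt_range (n := k)).imp (fun {i j} hij => by
      have := hanti (show k - 1 - j ≤ k - 1 - i by omega)
      simp only [hf]; omega)
  have hcoe : (Multiset.range k).map (fun i => ζ (k - 1 - i) + 2 * i + 1) = (L : Multiset ℕ) := by
    rw [hL, ← Multiset.coe_range, Multiset.map_coe]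
  have hsort : (L : Multiset ℕ).sort (· ≤ ·) = L := by
    apply List.Perm.eq_of_pairwise' (Multiset.pairwise_sort _ _) hLsorted
    exact Multiset.coe_eq_coe.1 (Multiset.sort_eq _ _)
  rw [hcoe, topSum, hsort]
  have hrev : L.reverse = List.map (fun j => f (k - 1 - j)) (List.range k) := by
    rw [hL, ← List.map_reverse, List.range_eq_range', List.reverse_range', List.map_map,
      ← List.range_eq_range']
    apply List.map_congr_left
    intro x hx
    simp only [Function.comp]
    congr 1
    omega
  rw [hrev, ← List.map_take, List.take_range]
  rw [← Multiset.sum_coe, ← Multiset.map_coe, Multiset.coe_range, Finset.sum_eq_multiset_sum]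
  have : (Finset.range (min r k)).val = Multiset.range (min r k) := rfl
  rw [this]
  apply congrArg Multiset.sum
  apply Multiset.map_congr rfl
  intro j hj
  have hjk : j < k := by
    have := Multiset.mem_range.1 hj; omega
  simp only [hf]
  have h1 : k - 1 - (k - 1 - j) = j := by omega
  rw [h1]
  omega

/-- if ζ ≤ ζ' in dominance order, then the partial sums of the
decreasing rearrangements γ, γ' of the u-symbol entries of (ξ',ζ) and (ξ',ζ')
satisfy γ_1 + ⋯ + γ_r ≤ γ'_1 + ⋯ + γ'_r for every r. -/
theorem stmt18 (k : ℕ) (ξ' ζ ζ' : ℕ → ℕ)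
    (hξ'_dec : ∀ i, ξ' (i + 1) ≤ ξ' i)
    (hζ_dec : ∀ i, ζ (i + 1) ≤ ζ i) (hζ'_dec : ∀ i, ζ' (i + 1) ≤ ζ' i)
    (hξ'_supp : ∀ i, k + 1 ≤ i → ξ' i = 0)
    (hζ_supp : ∀ i, k ≤ i → ζ i = 0) (hζ'_supp : ∀ i, k ≤ i → ζ' i = 0)
    (hsize : ∑ i ∈ range k, ζ i = ∑ i ∈ range k, ζ' i)
    (hdom : ∀ j, ∑ i ∈ range j, ζ i ≤ ∑ i ∈ range j, ζ' i) :
    ∀ r, topSum (usymbolEntries k ξ' ζ) r ≤ topSum (usymbolEntries k ξ' ζ') r := by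
  intro r
  unfold usymbolEntries
  apply stmt18.topSum_add_mono
  intro s
  rw [stmt18.bottom_topSum k ζ hζ_dec, stmt18.bottom_topSum k ζ' hζ'_dec]
  have h1 := Finset.sum_add_distrib (s := range (min s k)) (f := ζ)
    (g := fun j => 2 * (k - 1 - j) + 1)
  have h2 := Finset.sum_add_distrib (s := range (min s k)) (f := ζ')
    (g := fun j => 2 * (k - 1 - j) + 1)
  rw [h1, h2]
  exact Nat.add_le_add_right (hdom _) _
end

section
/- Fix a partition ξ' and partitions ζ, ζ' of the same integer such that both (ξ',ζ) and (ξ',ζ') yield u-symbols whose similarity classes have distinguished representatives with entry multisets γ and γ' (decreasingly ordered). Then γ_1 + ⋯ + γ_r ≤ γ'_1 + ⋯ + γ'_r for all r if and only if ζ ≤ ζ' in the dominance order. -/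
open Finset

namespace Stmt19Aux

lemma sum_take_mono (l : List ℕ) {r r' : ℕ} (h : r ≤ r') :
    (l.take r).sum ≤ (l.take r').sum := by
  obtain ⟨d, rfl⟩ := Nat.exists_eq_add_of_le h
  rw [List.take_add, List.sum_append]
  exact Nat.le_add_right _ _

lemma sum_take_succ_le (x : ℕ) : ∀ (l : List ℕ) (n : ℕ), (∀ y ∈ l, y ≤ x) →
    (l.take (n + 1)).sum ≤ x + (l.take n).sum
  | [], n, _ => by simp
  | z :: l, 0, h => by simpa using h z (by simp)
  | z :: l, n + 1, h => by
    simp only [List.take_succ_cons, List.sum_cons]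
    have := sum_take_succ_le x l n (fun y hy => h y (List.mem_cons_of_mem _ hy))
    omega

lemma sum_le_sum_take : ∀ (l : List ℕ), l.Pairwise (fun a b => b ≤ a) →
    ∀ (S : Multiset ℕ), S ≤ (l : Multiset ℕ) → S.sum ≤ (l.take (Multiset.card S)).sum
  | [], _, S, hS => by
    have : S = 0 := le_antisymm hS (by simp)
    simp [this]
  | x :: l, hl, S, hS => by
    by_cases hx : x ∈ S
    · have hS' : S.erase x ≤ (l : Multiset ℕ) := by
        have h1 := Multiset.erase_le_erase x hS
        rwa [show ((x :: l : List ℕ) : Multiset ℕ) = x ::ₘ (l : Multiset ℕ) from rfl,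
          Multiset.erase_cons_head] at h1
      have hrec := sum_le_sum_take l hl.of_cons (S.erase x) hS'
      have hc : Multiset.card S = Multiset.card (S.erase x) + 1 := by
        conv_lhs => rw [← Multiset.cons_erase hx]
        rw [Multiset.card_cons]
      have hsum : S.sum = x + (S.erase x).sum := by
        conv_lhs => rw [← Multiset.cons_erase hx]
        rw [Multiset.sum_cons]
      rw [hc, hsum, List.take_succ_cons, List.sum_cons]
      omega
    · have hS' : S ≤ (l : Multiset ℕ) := by
        rw [Multiset.le_iff_count]
        intro a
        rcases eq_or_ne a x with rfl | hne
        · simp [Multiset.count_eq_zero_of_notMem hx]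
        · have h1 := Multiset.count_le_of_le a hS
          rwa [show ((x :: l : List ℕ) : Multiset ℕ) = x ::ₘ (l : Multiset ℕ) from rfl,
            Multiset.count_cons_of_ne hne] at h1
      have hrec := sum_le_sum_take l hl.of_cons S hS'
      cases hn : Multiset.card S with
      | zero => simp [hn] at hrec ⊢; omega
      | succ n =>
        rw [hn] at hrec
        have h2 := sum_take_succ_le x l n (fun _ hy => List.rel_of_pairwise_cons hl hy)
        rw [List.take_succ_cons, List.sum_cons]
        omega

/-- The descending sorted list of a multiset. -/
def descList (γ : Multiset ℕ) : List ℕ := (γ.sort (· ≤ ·)).reverse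

lemma topSum_eq (γ : Multiset ℕ) (r : ℕ) : topSum γ r = ((descList γ).take r).sum := rfl

lemma descList_sorted (γ : Multiset ℕ) : (descList γ).Pairwise (fun a b => b ≤ a) := by
  rw [descList, List.pairwise_reverse]
  exact Multiset.pairwise_sort _ _

lemma descList_coe (γ : Multiset ℕ) : ((descList γ : List ℕ) : Multiset ℕ) = γ := by
  rw [descList, Multiset.coe_reverse, Multiset.sort_eq]

lemma descList_length (γ : Multiset ℕ) : (descList γ).length = Multiset.card γ := by
  rw [descList, List.length_reverse, Multiset.length_sort]

lemma sum_le_topSum {γ S : Multiset ℕ} {r : ℕ} (hS : S ≤ γ) (hr : Multiset.card S ≤ r) :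
    S.sum ≤ topSum γ r := by
  rw [topSum_eq]
  refine le_trans ?_ (sum_take_mono _ hr)
  exact sum_le_sum_take (descList γ) (descList_sorted γ) S (by rwa [descList_coe])

lemma topSum_mono (γ : Multiset ℕ) {r r' : ℕ} (h : r ≤ r') : topSum γ r ≤ topSum γ r' :=
  sum_take_mono _ h

/-- The top `r` elements as a multiset. -/
def topPart (γ : Multiset ℕ) (r : ℕ) : Multiset ℕ := ((descList γ).take r : List ℕ)

lemma topPart_le (γ : Multiset ℕ) (r : ℕ) : topPart γ r ≤ γ := by
  rw [topPart]
  conv_rhs => rw [← descList_coe γ]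
  exact Multiset.coe_le.2 (List.take_sublist _ _).subperm

lemma topPart_card (γ : Multiset ℕ) (r : ℕ) :
    Multiset.card (topPart γ r) = min r (Multiset.card γ) := by
  simp [topPart, List.length_take, descList_length]

lemma topPart_sum (γ : Multiset ℕ) (r : ℕ) : (topPart γ r).sum = topSum γ r := by
  rw [topPart, Multiset.sum_coe, topSum_eq]

lemma topSum_add_le (M N : Multiset ℕ) (s t : ℕ) :
    topSum M s + topSum N t ≤ topSum (M + N) (s + t) := by
  have hle : topPart M s + topPart N t ≤ M + N :=
    add_le_add (topPart_le M s) (topPart_le N t)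
  have hc : Multiset.card (topPart M s + topPart N t) ≤ s + t := by
    rw [Multiset.card_add, topPart_card, topPart_card]
    omega
  have := sum_le_topSum hle hc
  rwa [Multiset.sum_add, topPart_sum, topPart_sum] at this

lemma topSum_split (M N : Multiset ℕ) (r : ℕ) :
    ∃ s t, s ≤ Multiset.card M ∧ t ≤ Multiset.card N ∧
      s + t = min r (Multiset.card M + Multiset.card N) ∧
      topSum (M + N) r ≤ topSum M s + topSum N t := by
  classical
  set T := topPart (M + N) r with hT_def
  have hT : T ≤ M + N := topPart_le _ _
  have hTc : Multiset.card T = min r (Multiset.card M + Multiset.card N) := by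
    rw [hT_def, topPart_card, Multiset.card_add]
  set TA := T ∩ M with hTA_def
  set TB := T - TA with hTB_def
  have hTA_M : TA ≤ M := Multiset.inter_le_right
  have hTA_T : TA ≤ T := Multiset.inter_le_left
  have hsum : TA + TB = T := add_tsub_cancel_of_le hTA_T
  have hTB_N : TB ≤ N := by
    rw [Multiset.le_iff_count]
    intro a
    have h1 := Multiset.count_le_of_le a hT
    rw [Multiset.count_add] at h1
    rw [hTB_def, Multiset.count_sub, hTA_def, Multiset.count_inter]
    omega
  refine ⟨Multiset.card TA, Multiset.card TB, Multiset.card_le_card hTA_M,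
    Multiset.card_le_card hTB_N, ?_, ?_⟩
  · rw [← hTc, ← hsum, Multiset.card_add]
  · have h2 : topSum (M + N) r = TA.sum + TB.sum := by
      rw [← Multiset.sum_add, hsum, hT_def, topPart_sum]
    rw [h2]
    exact add_le_add (sum_le_topSum hTA_M le_rfl) (sum_le_topSum hTB_N le_rfl)

lemma range_reverse : ∀ n : ℕ, (List.range n).reverse = (List.range n).map (fun i => n - 1 - i)
  | 0 => rfl
  | n + 1 => by
    conv_lhs => rw [List.range_succ]
    conv_rhs => rw [List.range_succ_eq_map]
    rw [List.reverse_append, List.map_cons, List.map_map]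
    simp only [List.reverse_cons, List.reverse_nil, List.nil_append, List.singleton_append]
    congr 1
    rw [range_reverse n]
    apply List.map_congr_left
    intro i _
    simp only [Function.comp_apply]
    omega

lemma sort_map_range {f : ℕ → ℕ} (hf : Monotone f) (n : ℕ) :
    Multiset.sort ((Multiset.range n).map f) (· ≤ ·) = (List.range n).map f := by
  refine (fun h1 h2 h3 => List.Perm.eq_of_pairwise' (r := fun a b : ℕ => a ≤ b) h2 h3 h1) ?_ ?_ ?_
  · rw [← Multiset.coe_eq_coe, Multiset.sort_eq]
    rfl
  · exact Multiset.pairwise_sort _ _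
  · exact List.Pairwise.map f (fun a b h => hf h.le) (List.pairwise_lt_range (n := n))

lemma topSum_map_range {f : ℕ → ℕ} (hf : Monotone f) (n r : ℕ) :
    topSum ((Multiset.range n).map f) r = ∑ i ∈ range (min r n), f (n - 1 - i) := by
  rw [topSum, sort_map_range hf, ← List.map_reverse, range_reverse, List.map_map,
    ← List.map_take, List.take_range]
  rw [show min r n = r ⊓ n from rfl]
  rw [show ∑ i ∈ range (r ⊓ n), f (n - 1 - i) =
    ((Multiset.range (r ⊓ n)).map (fun i => f (n - 1 - i))).sum from rfl]
  rfl

lemma exists_pivot {f : ℕ → ℕ} (hf : Monotone f) (k β : ℕ) :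
    ∃ m, m ≤ k + 1 ∧ (∀ i < m, f i ≤ β) ∧ ∀ i, m ≤ i → i ≤ k → β < f i := by
  by_cases h : f k ≤ β
  · exact ⟨k + 1, le_rfl, fun i hi => le_trans (hf (by omega)) h, fun i h1 h2 => by omega⟩
  · push_neg at h
    have hw : ∃ i, β < f i := ⟨k, h⟩
    refine ⟨Nat.find hw, ?_, ?_, ?_⟩
    · have := Nat.find_min' hw h
      omega
    · intro i hi
      have := Nat.find_min hw hi
      omega
    · intro i h1 _
      exact lt_of_lt_of_le (Nat.find_spec hw) (hf h1)

end Stmt19Aux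

open Stmt19Aux in
/-- with γ, γ' the decreasingly ordered entry multisets of the
distinguished u-symbols attached to (ξ',ζ) and (ξ',ζ'), one has
γ_1 + ⋯ + γ_r ≤ γ'_1 + ⋯ + γ'_r for all r iff ζ ≤ ζ' in dominance order. -/
theorem stmt19 (k : ℕ) (ξ' ζ ζ' : ℕ → ℕ)
    (hξ'_dec : ∀ i, ξ' (i + 1) ≤ ξ' i)
    (hζ_dec : ∀ i, ζ (i + 1) ≤ ζ i) (hζ'_dec : ∀ i, ζ' (i + 1) ≤ ζ' i)
    (hξ'_supp : ∀ i, k + 1 ≤ i → ξ' i = 0)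
    (hζ_supp : ∀ i, k ≤ i → ζ i = 0) (hζ'_supp : ∀ i, k ≤ i → ζ' i = 0)
    (hsize : ∑ i ∈ range k, ζ i = ∑ i ∈ range k, ζ' i) :
    (∀ r, topSum (usymbolEntries k ξ' ζ) r ≤ topSum (usymbolEntries k ξ' ζ') r) ↔
      (∀ j, ∑ i ∈ range j, ζ i ≤ ∑ i ∈ range j, ζ' i) := by
  classical
  -- the top row and bottom row
  set a : ℕ → ℕ := fun i => ξ' (k - i) + 2 * i with ha_def
  have ha_mono : Monotone a := by
    intro i j hij
    have hξ : Antitone ξ' := antitone_nat_of_succ_le hξ'_dec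
    have := hξ (Nat.sub_le_sub_left hij k)
    simp only [ha_def]
    omega
  set bf : (ℕ → ℕ) → ℕ → ℕ := fun η i => η (k - 1 - i) + 2 * i + 1 with hbf_def
  have hbf_mono : ∀ η, (∀ i, η (i + 1) ≤ η i) → Monotone (bf η) := by
    intro η hη i j hij
    have hηa : Antitone η := antitone_nat_of_succ_le hη
    have := hηa (Nat.sub_le_sub_left hij (k - 1))
    simp only [hbf_def]
    omega
  set Ma : Multiset ℕ := (Multiset.range (k + 1)).map a with hMa_def
  have husym : ∀ η, usymbolEntries k ξ' η =
      Ma + (Multiset.range k).map (bf η) := fun η => rfl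
  have hMa_card : Multiset.card Ma = k + 1 := by
    rw [hMa_def, Multiset.card_map, Multiset.card_range]
  have hMb_card : ∀ η, Multiset.card ((Multiset.range k).map (bf η)) = k := by
    intro η
    rw [Multiset.card_map, Multiset.card_range]
  -- formulas for topSum of each row
  have hTA : ∀ s, topSum Ma s = ∑ i ∈ range (min s (k + 1)), a (k - i) := by
    intro s
    rw [hMa_def, topSum_map_range ha_mono]
    apply Finset.sum_congr rfl
    intro i _
    congr 1
  have hTA_step : ∀ s, s ≤ k → topSum Ma (s + 1) = topSum Ma s + a (k - s) := by
    intro s hs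
    rw [hTA, hTA, min_eq_left (by omega), min_eq_left (by omega), Finset.sum_range_succ]
  have hTB : ∀ η, (∀ i, η (i + 1) ≤ η i) → ∀ t,
      topSum ((Multiset.range k).map (bf η)) t = ∑ i ∈ range (min t k), bf η (k - 1 - i) := by
    intro η hη t
    rw [topSum_map_range (hbf_mono η hη)]
  have hTB_step : ∀ η, (∀ i, η (i + 1) ≤ η i) → ∀ t, t + 1 ≤ k →
      topSum ((Multiset.range k).map (bf η)) (t + 1) =
        topSum ((Multiset.range k).map (bf η)) t + bf η (k - 1 - t) := by
    intro η hη t ht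
    rw [hTB η hη, hTB η hη, min_eq_left (by omega), min_eq_left (by omega),
      Finset.sum_range_succ]
  have hTB_val : ∀ η, (∀ i, η (i + 1) ≤ η i) → ∀ t, t ≤ k →
      topSum ((Multiset.range k).map (bf η)) t =
        (∑ i ∈ range t, η i) + ∑ i ∈ range t, (2 * (k - 1 - i) + 1) := by
    intro η hη t ht
    rw [hTB η hη, min_eq_left ht, ← Finset.sum_add_distrib]
    apply Finset.sum_congr rfl
    intro i hi
    rw [Finset.mem_range] at hi
    simp only [hbf_def]
    have h1 : k - 1 - (k - 1 - i) = i := by omega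
    rw [h1]
    ring
  have hTB_le_iff : ∀ t, t ≤ k →
      (topSum ((Multiset.range k).map (bf ζ)) t ≤ topSum ((Multiset.range k).map (bf ζ')) t ↔
        ∑ i ∈ range t, ζ i ≤ ∑ i ∈ range t, ζ' i) := by
    intro t ht
    rw [hTB_val ζ hζ_dec t ht, hTB_val ζ' hζ'_dec t ht]
    omega
  constructor
  · -- topSum dominance → partial sum dominance
    intro htop j
    by_cases hj : k ≤ j
    · have e1 : ∑ i ∈ range j, ζ i = ∑ i ∈ range k, ζ i :=
        (Finset.sum_subset (Finset.range_subset_range.2 hj)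
          (fun x _ hx => hζ_supp x (by simpa using hx))).symm
      have e2 : ∑ i ∈ range j, ζ' i = ∑ i ∈ range k, ζ' i :=
        (Finset.sum_subset (Finset.range_subset_range.2 hj)
          (fun x _ hx => hζ'_supp x (by simpa using hx))).symm
      rw [e1, e2, hsize]
    · push_neg at hj
      set β : ℕ := bf ζ' (k - 1 - j) with hβ_def
      obtain ⟨m, hm1, hm2, hm3⟩ := exists_pivot ha_mono k β
      set s : ℕ := k + 1 - m with hs_def
      set r : ℕ := s + j with hr_def
      set G : ℕ → ℕ := fun t => topSum Ma (r - t) + topSum ((Multiset.range k).map (bf ζ')) t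
        with hG_def
      -- going up towards j
      have up : ∀ d t, t + d = j → r ≤ k + 1 + t → G t ≤ G j := by
        intro d
        induction d with
        | zero =>
          intro t ht _
          rw [show t = j by omega]
        | succ d ih =>
          intro t ht hv
          have hstep : G t ≤ G (t + 1) := by
            have e1 : r - t = (r - t - 1) + 1 := by omega
            have h1 : r - t - 1 ≤ k := by omega
            have hA := hTA_step (r - t - 1) h1
            rw [← e1] at hA
            have hB := hTB_step ζ' hζ'_dec t (by omega)
            have hidx : k - (r - t - 1) < m := by omega
            have h2 : a (k - (r - t - 1)) ≤ β := hm2 _ hidx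
            have h3 : β ≤ bf ζ' (k - 1 - t) :=
              hbf_mono ζ' hζ'_dec (show k - 1 - j ≤ k - 1 - t by omega)
            have e2 : r - (t + 1) = r - t - 1 := by omega
            simp only [hG_def]
            rw [e2, hA, hB]
            omega
          exact hstep.trans (ih (t + 1) (by omega) (by omega))
      -- going down towards j
      have down : ∀ d t, t = j + d → t ≤ r → t ≤ k → G t ≤ G j := by
        intro d
        induction d with
        | zero =>
          intro t ht _ _
          rw [show t = j by omega]
        | succ d ih =>
          intro t ht htr htk
          have hstep : G t ≤ G (j + d) := by
            have e1 : r - (j + d) = (r - t) + 1 := by omega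
            have h1 : r - t ≤ k := by omega
            have hA := hTA_step (r - t) h1
            rw [← e1] at hA
            have hB := hTB_step ζ' hζ'_dec (j + d) (by omega)
            rw [show j + d + 1 = t by omega] at hB
            have hidx1 : m ≤ k - (r - t) := by omega
            have hidx2 : k - (r - t) ≤ k := by omega
            have h2 : β < a (k - (r - t)) := hm3 _ hidx1 hidx2
            have h3 : bf ζ' (k - 1 - (j + d)) ≤ β :=
              hbf_mono ζ' hζ'_dec (show k - 1 - (j + d) ≤ k - 1 - j by omega)
            simp only [hG_def]
            rw [hA, hB]
            omega
          exact hstep.trans (ih (j + d) rfl (by omega) (by omega))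
      -- split topSum of γ' at level r
      obtain ⟨s', t', hs', ht', hst, hle⟩ :=
        topSum_split Ma ((Multiset.range k).map (bf ζ')) r
      rw [hMa_card] at hs'
      rw [hMb_card] at ht'
      rw [hMa_card, hMb_card] at hst
      have hst' : s' + t' = r := by omega
      have hupper : topSum (usymbolEntries k ξ' ζ') r ≤
          topSum Ma s + topSum ((Multiset.range k).map (bf ζ')) j := by
        rw [husym]
        refine hle.trans ?_
        have hGt' : topSum Ma s' + topSum ((Multiset.range k).map (bf ζ')) t' = G t' := by
          simp only [hG_def]
          rw [show r - t' = s' by omega]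
        have hGj : G j = topSum Ma s + topSum ((Multiset.range k).map (bf ζ')) j := by
          simp only [hG_def]
          rw [show r - j = s by omega]
        rw [hGt', ← hGj]
        rcases le_or_gt t' j with h | h
        · exact up (j - t') t' (by omega) (by omega)
        · exact down (t' - j) t' (by omega) (by omega) (by omega)
      have hlower : topSum Ma s + topSum ((Multiset.range k).map (bf ζ)) j ≤
          topSum (usymbolEntries k ξ' ζ) r := by
        rw [husym, hr_def]
        exact topSum_add_le _ _ _ _
      have hmain := (hlower.trans (htop r)).trans hupper
      have hfin : topSum ((Multiset.range k).map (bf ζ)) j ≤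
          topSum ((Multiset.range k).map (bf ζ')) j := by omega
      exact (hTB_le_iff j (by omega)).1 hfin
  · -- partial sum dominance → topSum dominance
    intro hdom r
    obtain ⟨s', t', hs', ht', hst, hle⟩ :=
      topSum_split Ma ((Multiset.range k).map (bf ζ)) r
    rw [hMa_card] at hs'
    rw [hMb_card] at ht'
    rw [hMa_card, hMb_card] at hst
    rw [husym ζ]
    refine hle.trans ?_
    have h1 : topSum ((Multiset.range k).map (bf ζ)) t' ≤
        topSum ((Multiset.range k).map (bf ζ')) t' :=
      (hTB_le_iff t' ht').2 (hdom t')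
    have h2 : topSum Ma s' + topSum ((Multiset.range k).map (bf ζ')) t' ≤
        topSum (Ma + (Multiset.range k).map (bf ζ')) (s' + t') :=
      topSum_add_le _ _ _ _
    have h3 : topSum (Ma + (Multiset.range k).map (bf ζ')) (s' + t') ≤
        topSum (usymbolEntries k ξ' ζ') r := by
      rw [husym ζ']
      exact topSum_mono _ (by omega)
    omega
end
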